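/- arXiv:2401.00298 — 12 statements merged into one kernel-verified Lean document; each statement's English description precedes it below -/
import Mathlib

section
/- Let n be a positive integer, let v, c : {1,…,n} → ℝ be nonnegative, and let B ≥ 0. Then the maximum over all bonus allocations R : {1,…,n} → ℝ with R(i) ≥ 0 for all i and ∑_{i=1}^n R(i) ≤ B of the quantity (1/n)·∑_{i : R(i) ≥ c(i)} v(i) is attained, and it equals (1/n) times the 0/1-knapsack optimum max{ ∑_{i∈T} v(i) : T ⊆ {1,…,n}, ∑_{i∈T} c(i) ≤ B }. -/
open Finset
open scoped Classical

/-- value correspondence between the bonus-allocation problem over `n` gadgets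
and the 0/1-knapsack problem. -/
theorem stmt_0 (n : ℕ) (hn : 0 < n) (v c : Fin n → ℝ)
    (hv : ∀ i, 0 ≤ v i) (hc : ∀ i, 0 ≤ c i) (B : ℝ) (hB : 0 ≤ B) :
    ∃ R : Fin n → ℝ, (∀ i, 0 ≤ R i) ∧ (∑ i, R i) ≤ B ∧
      (∀ R' : Fin n → ℝ, (∀ i, 0 ≤ R' i) → (∑ i, R' i) ≤ B →
        ((1 : ℝ) / n) * ∑ i ∈ univ.filter (fun i => c i ≤ R' i), v i ≤
          ((1 : ℝ) / n) * ∑ i ∈ univ.filter (fun i => c i ≤ R i), v i) ∧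
      ∃ T : Finset (Fin n), (∑ i ∈ T, c i) ≤ B ∧
        (∀ T' : Finset (Fin n), (∑ i ∈ T', c i) ≤ B → ∑ i ∈ T', v i ≤ ∑ i ∈ T, v i) ∧
        ((1 : ℝ) / n) * ∑ i ∈ univ.filter (fun i => c i ≤ R i), v i =
          ((1 : ℝ) / n) * ∑ i ∈ T, v i := by
  -- feasible subsets
  have hfeas : (∅ : Finset (Fin n)) ∈ (univ : Finset (Finset (Fin n))).filter
      (fun T => ∑ i ∈ T, c i ≤ B) := by simp [hB]
  obtain ⟨T, hTmem, hTmax⟩ := Finset.exists_max_image _ (fun T => ∑ i ∈ T, v i) ⟨_, hfeas⟩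
  rw [mem_filter] at hTmem
  have hTB : ∑ i ∈ T, c i ≤ B := hTmem.2
  have hTopt : ∀ T' : Finset (Fin n), (∑ i ∈ T', c i) ≤ B → ∑ i ∈ T', v i ≤ ∑ i ∈ T, v i := by
    intro T' hT'
    exact hTmax T' (by simp [hT'])
  set R : Fin n → ℝ := fun i => if i ∈ T then c i else 0 with hR
  have hRnn : ∀ i, 0 ≤ R i := by
    intro i; simp only [hR]; split
    · exact hc i
    · exact le_rfl
  have hRsum : (∑ i, R i) ≤ B := by
    calc ∑ i, R i = ∑ i ∈ T, c i := by
          rw [← Finset.sum_filter]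
          congr 1
          ext i; simp
      _ ≤ B := hTB
  -- the filter set equals a feasible superset of T with equal value
  have hfil : ∑ i ∈ univ.filter (fun i => c i ≤ R i), v i = ∑ i ∈ T, v i := by
    apply le_antisymm
    · apply hTopt
      calc ∑ i ∈ univ.filter (fun i => c i ≤ R i), c i
          ≤ ∑ i ∈ univ.filter (fun i => c i ≤ R i), R i := by
            apply Finset.sum_le_sum; intro i hi; exact (mem_filter.mp hi).2
        _ ≤ ∑ i, R i := Finset.sum_le_sum_of_subset_of_nonneg (subset_univ _)
            (fun i _ _ => hRnn i)
        _ ≤ B := hRsum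
    · apply Finset.sum_le_sum_of_subset_of_nonneg
      · intro i hi
        simp only [mem_filter, mem_univ, true_and, hR, if_pos hi]
        exact le_rfl
      · intro i _ _; exact hv i
  refine ⟨R, hRnn, hRsum, ?_, T, hTB, hTopt, by rw [hfil]⟩
  intro R' hR'nn hR'sum
  have h1n : (0:ℝ) ≤ 1 / n := by positivity
  apply mul_le_mul_of_nonneg_left _ h1n
  rw [hfil]
  apply hTopt
  calc ∑ i ∈ univ.filter (fun i => c i ≤ R' i), c i
      ≤ ∑ i ∈ univ.filter (fun i => c i ≤ R' i), R' i := by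
        apply Finset.sum_le_sum; intro i hi; exact (mem_filter.mp hi).2
    _ ≤ ∑ i, R' i := Finset.sum_le_sum_of_subset_of_nonneg (subset_univ _)
        (fun i _ _ => hR'nn i)
    _ ≤ B := hR'sum
end

section
/- In any DDP with agent reward R^A, agent-optimal policy π^A, and budget B ≥ 0, a policy π is B-implementable if and only if V(π, R^A) ≥ V(π^A, R^A) − B. -/
open Finset

/-- in a deterministic finite-horizon decision process (DDP), a policy `π`
is `B`-implementable if and only if `V(π, R^A) ≥ V(π^A, R^A) − B`. -/
theorem stmt_1 {S A : Type} [Fintype S] [Fintype A]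
    (s₀ : S) (act : S → Finset A) (next : S → A → S)
    (rank : S → ℕ) (hacyc : ∀ s, ∀ a ∈ act s, rank (next s a) < rank s)
    (V : (S → A) → (S → A → ℝ) → S → ℝ)
    (hVterm : ∀ (π : S → A) (R : S → A → ℝ) (s : S), act s = ∅ → V π R s = 0)
    (hVrec : ∀ (π : S → A) (R : S → A → ℝ) (s : S), act s ≠ ∅ →
      V π R s = R s (π s) + V π R (next s (π s)))
    (RA : S → A → ℝ)
    (πA : S → A) (hπA : ∀ s, act s ≠ ∅ → πA s ∈ act s)
    (hπAopt : ∀ π : S → A, (∀ s, act s ≠ ∅ → π s ∈ act s) → ∀ s, V π RA s ≤ V πA RA s)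
    (B : ℝ) (hB : 0 ≤ B)
    (π : S → A) (hπ : ∀ s, act s ≠ ∅ → π s ∈ act s) :
    (∃ RB : S → A → ℝ, (∀ s a, 0 ≤ RB s a) ∧ (∑ s, ∑ a, RB s a) ≤ B ∧
      ∀ π' : S → A, (∀ s, act s ≠ ∅ → π' s ∈ act s) →
        V π' (fun s a => RA s a + RB s a) s₀ ≤ V π (fun s a => RA s a + RB s a) s₀)
    ↔ V πA RA s₀ - B ≤ V π RA s₀ := by
  classical
  -- additivity of V
  have Vadd : ∀ n (π' : S → A), (∀ s, act s ≠ ∅ → π' s ∈ act s) →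
      ∀ (R1 R2 : S → A → ℝ) (s : S), rank s < n →
      V π' (fun s a => R1 s a + R2 s a) s = V π' R1 s + V π' R2 s := by
    intro n
    induction n with
    | zero => intro π' hv R1 R2 s hs; omega
    | succ n ih =>
      intro π' hv R1 R2 s hs
      by_cases hterm : act s = ∅
      · rw [hVterm _ _ _ hterm, hVterm _ _ _ hterm, hVterm _ _ _ hterm]; ring
      · have hlt := hacyc s (π' s) (hv s hterm)
        rw [hVrec _ _ _ hterm, hVrec _ _ _ hterm, hVrec _ _ _ hterm,
          ih π' hv R1 R2 _ (by omega)]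
        ring
  -- nonnegativity of V for nonnegative rewards
  have Vnn : ∀ n (π' : S → A), (∀ s, act s ≠ ∅ → π' s ∈ act s) →
      ∀ (R : S → A → ℝ), (∀ s a, 0 ≤ R s a) → ∀ s : S, rank s < n → 0 ≤ V π' R s := by
    intro n
    induction n with
    | zero => intro π' hv R hR s hs; omega
    | succ n ih =>
      intro π' hv R hR s hs
      by_cases hterm : act s = ∅
      · rw [hVterm _ _ _ hterm]
      · have hlt := hacyc s (π' s) (hv s hterm)
        rw [hVrec _ _ _ hterm]
        have := ih π' hv R hR (next s (π' s)) (by omega)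
        have := hR s (π' s)
        linarith
  -- V of a policy only depends on actions at states of rank ≤ rank s
  have Vagree : ∀ n (π₁ π₂ : S → A), (∀ s, act s ≠ ∅ → π₁ s ∈ act s) →
      ∀ (R : S → A → ℝ) (s : S), rank s < n →
      (∀ t, rank t ≤ rank s → π₁ t = π₂ t) → V π₁ R s = V π₂ R s := by
    intro n
    induction n with
    | zero => intro _ _ _ _ s hs; omega
    | succ n ih =>
      intro π₁ π₂ hv R s hs hag
      by_cases hterm : act s = ∅
      · rw [hVterm _ _ _ hterm, hVterm _ _ _ hterm]
      · have hlt := hacyc s (π₁ s) (hv s hterm)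
        have hps : π₁ s = π₂ s := hag s le_rfl
        rw [hVrec _ _ _ hterm, hVrec _ _ _ hterm, ← hps,
          ih π₁ π₂ hv R (next s (π₁ s)) (by omega)
            (fun t ht => hag t (by omega))]
  -- one-step optimality of πA
  have hopt1 : ∀ s a, act s ≠ ∅ → a ∈ act s →
      RA s a + V πA RA (next s a) ≤ V πA RA s := by
    intro s a hterm ha
    set π'' : S → A := fun t => if t = s then a else πA t with hπ''
    have hv : ∀ t, act t ≠ ∅ → π'' t ∈ act t := by
      intro t ht
      by_cases h : t = s
      · subst h; simpa [hπ''] using ha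
      · simpa [hπ'', h] using hπA t ht
    have hlt := hacyc s a ha
    have h1 : V π'' RA s = RA s a + V π'' RA (next s a) := by
      have := hVrec π'' RA s hterm
      simpa [hπ''] using this
    have h2 : V π'' RA (next s a) = V πA RA (next s a) := by
      refine Vagree (rank (next s a) + 1) π'' πA hv RA (next s a) (by omega) ?_
      intro t ht
      have : t ≠ s := by intro h; subst h; omega
      simp [hπ'', this]
    have := hπAopt π'' hv s
    rw [h1, h2] at this
    exact this
  constructor
  · rintro ⟨RB, hnn, hcost, hopt⟩
    -- bound: V π' RB s ≤ total cost
    have Vle : ∀ n (π' : S → A), (∀ s, act s ≠ ∅ → π' s ∈ act s) →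
        ∀ s : S, rank s < n →
        V π' RB s ≤ ∑ t ∈ univ.filter (fun t => rank t ≤ rank s), RB t (π' t) := by
      intro n
      induction n with
      | zero => intro _ _ s hs; omega
      | succ n ih =>
        intro π' hv s hs
        by_cases hterm : act s = ∅
        · rw [hVterm _ _ _ hterm]
          exact Finset.sum_nonneg fun t _ => hnn t (π' t)
        · have hlt := hacyc s (π' s) (hv s hterm)
          rw [hVrec _ _ _ hterm]
          have h1 := ih π' hv (next s (π' s)) (by omega)
          have hsub : insert s (univ.filter (fun t => rank t ≤ rank (next s (π' s)))) ⊆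
              univ.filter (fun t => rank t ≤ rank s) := by
            intro t ht
            rcases Finset.mem_insert.mp ht with h | h
            · subst h; simp
            · simp only [Finset.mem_filter, Finset.mem_univ, true_and] at h ⊢
              omega
          have hns : s ∉ univ.filter (fun t => rank t ≤ rank (next s (π' s))) := by
            simp only [Finset.mem_filter, Finset.mem_univ, true_and]
            omega
          have h2 : RB s (π' s) + ∑ t ∈ univ.filter (fun t => rank t ≤ rank (next s (π' s))), RB t (π' t)
              ≤ ∑ t ∈ univ.filter (fun t => rank t ≤ rank s), RB t (π' t) :=
            calc RB s (π' s) + ∑ t ∈ univ.filter (fun t => rank t ≤ rank (next s (π' s))), RB t (π' t)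
                = ∑ t ∈ insert s (univ.filter (fun t => rank t ≤ rank (next s (π' s)))), RB t (π' t) :=
                  (Finset.sum_insert (f := fun t => RB t (π' t)) hns).symm
              _ ≤ _ := Finset.sum_le_sum_of_subset_of_nonneg hsub fun t _ _ => hnn t (π' t)
          linarith
    have VleB : ∀ (π' : S → A), (∀ s, act s ≠ ∅ → π' s ∈ act s) → V π' RB s₀ ≤ B := by
      intro π' hv
      have h1 := Vle (rank s₀ + 1) π' hv s₀ (by omega)
      have h2 : ∑ t ∈ univ.filter (fun t => rank t ≤ rank s₀), RB t (π' t)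
          ≤ ∑ t, RB t (π' t) :=
        Finset.sum_le_sum_of_subset_of_nonneg (Finset.filter_subset _ _)
          fun t _ _ => hnn t (π' t)
      have h3 : ∑ t, RB t (π' t) ≤ ∑ s, ∑ a, RB s a :=
        Finset.sum_le_sum fun t _ =>
          Finset.single_le_sum (fun a _ => hnn t a) (Finset.mem_univ (π' t))
      linarith
    have hA := hopt πA hπA
    rw [Vadd (rank s₀ + 1) πA hπA RA RB s₀ (by omega),
      Vadd (rank s₀ + 1) π hπ RA RB s₀ (by omega)] at hA
    have h1 : 0 ≤ V πA RB s₀ := Vnn (rank s₀ + 1) πA hπA RB hnn s₀ (by omega)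
    have h2 : V π RB s₀ ≤ B := VleB π hπ
    have h3 := hπAopt π hπ s₀
    linarith
  · intro h
    -- construct the bonus along the trajectory of π from s₀
    set step : S → S := fun s => if act s = ∅ then s else next s (π s) with hstep
    set gap : S → ℝ := fun s => V πA RA s - RA s (π s) - V πA RA (next s (π s)) with hgap
    set RB : S → A → ℝ := fun s a =>
      if (∃ k, step^[k] s₀ = s) ∧ a = π s ∧ act s ≠ ∅ then gap s else 0 with hRB
    have gap_nonneg : ∀ s, act s ≠ ∅ → 0 ≤ gap s := by
      intro s hterm
      have := hopt1 s (π s) hterm (hπ s hterm)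
      simp only [hgap]
      linarith
    have hnn : ∀ s a, 0 ≤ RB s a := by
      intro s a
      simp only [hRB]
      split
      · next hc => exact gap_nonneg s hc.2.2
      · exact le_rfl
        -- basic trajectory facts
    have rank_step : ∀ s, rank (step s) ≤ rank s := by
      intro s
      by_cases hterm : act s = ∅
      · simp [hstep, hterm]
      · have := hacyc s (π s) (hπ s hterm)
        simp only [hstep, if_neg hterm]
        omega
    have rank_iter : ∀ k s, rank (step^[k] s) ≤ rank s := by
      intro k
      induction k with
      | zero => intro s; simp
      | succ k ih =>
        intro s
        rw [Function.iterate_succ_apply']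
        exact le_trans (rank_step _) (ih s)
    have iter_term : ∀ k s, act s = ∅ → step^[k] s = s := by
      intro k
      induction k with
      | zero => intro s _; rfl
      | succ k ih =>
        intro s hterm
        rw [Function.iterate_succ_apply, hstep]
        simp only [if_pos hterm]
        exact ih s hterm
    have reach_cons : ∀ s t, act s ≠ ∅ →
        ((∃ k, step^[k] s = t) ↔ t = s ∨ ∃ k, step^[k] (next s (π s)) = t) := by
      intro s t hterm
      constructor
      · rintro ⟨k, hk⟩
        cases k with
        | zero => left; exact hk.symm
        | succ k =>
          right
          refine ⟨k, ?_⟩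
          rw [Function.iterate_succ_apply, hstep] at hk
          simpa [if_neg hterm] using hk
      · rintro (rfl | ⟨k, hk⟩)
        · exact ⟨0, rfl⟩
        · refine ⟨k + 1, ?_⟩
          rw [Function.iterate_succ_apply, hstep]
          simpa [if_neg hterm] using hk
    -- telescoping cost
    have costlem : ∀ n s, rank s < n →
        ∑ t ∈ univ.filter (fun t => (∃ k, step^[k] s = t) ∧ act t ≠ ∅), gap t
          = V πA RA s - V π RA s := by
      intro n
      induction n with
      | zero => intro s hs; omega
      | succ n ih =>
        intro s hs
        by_cases hterm : act s = ∅
        · have hempty : univ.filter (fun t => (∃ k, step^[k] s = t) ∧ act t ≠ ∅) = ∅ := by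
            ext t
            simp only [Finset.mem_filter, Finset.mem_univ, true_and, Finset.notMem_empty,
              iff_false, not_and]
            rintro ⟨k, hk⟩
            rw [iter_term k s hterm] at hk
            subst hk
            simp [hterm]
          rw [hempty, hVterm _ _ _ hterm, hVterm _ _ _ hterm]
          simp
        · have hlt := hacyc s (π s) (hπ s hterm)
          have hset : univ.filter (fun t => (∃ k, step^[k] s = t) ∧ act t ≠ ∅)
              = insert s (univ.filter
                  (fun t => (∃ k, step^[k] (next s (π s)) = t) ∧ act t ≠ ∅)) := by
            ext t
            simp only [Finset.mem_filter, Finset.mem_univ, true_and, Finset.mem_insert]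
            rw [reach_cons s t hterm]
            constructor
            · rintro ⟨h1 | h1, h2⟩
              · exact Or.inl h1
              · exact Or.inr ⟨h1, h2⟩
            · rintro (rfl | ⟨h1, h2⟩)
              · exact ⟨Or.inl rfl, hterm⟩
              · exact ⟨Or.inr h1, h2⟩
          have hns : s ∉ univ.filter
              (fun t => (∃ k, step^[k] (next s (π s)) = t) ∧ act t ≠ ∅) := by
            simp only [Finset.mem_filter, Finset.mem_univ, true_and, not_and]
            rintro ⟨k, hk⟩
            have := rank_iter k (next s (π s))
            rw [hk] at this
            omega
          rw [hset, Finset.sum_insert hns, ih (next s (π s)) (by omega),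
            hVrec π RA s hterm]
          simp only [hgap]
          ring
    -- reach propagation
    have reach_next : ∀ s, act s ≠ ∅ → (∃ k, step^[k] s₀ = s) →
        ∃ k, step^[k] s₀ = next s (π s) := by
      rintro s hterm ⟨k, hk⟩
      refine ⟨k + 1, ?_⟩
      rw [Function.iterate_succ_apply', hk, hstep]
      simp [if_neg hterm]
    -- value of π under RA + RB equals V πA RA on the trajectory
    have eqlem : ∀ n s, rank s < n → (∃ k, step^[k] s₀ = s) →
        V π (fun s a => RA s a + RB s a) s = V πA RA s := by
      intro n
      induction n with
      | zero => intro s hs; omega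
      | succ n ih =>
        intro s hs hr
        by_cases hterm : act s = ∅
        · rw [hVterm _ _ _ hterm, hVterm _ _ _ hterm]
        · have hlt := hacyc s (π s) (hπ s hterm)
          rw [hVrec _ _ _ hterm, ih (next s (π s)) (by omega) (reach_next s hterm hr)]
          have hRBs : RB s (π s) = gap s := by
            simp only [hRB]
            exact if_pos ⟨hr, by trivial, hterm⟩
          rw [hRBs]
          simp only [hgap]
          ring
    -- every policy's value under RA + RB is at most V πA RA
    have mainlem : ∀ n (π' : S → A), (∀ s, act s ≠ ∅ → π' s ∈ act s) →
        ∀ s, rank s < n → V π' (fun s a => RA s a + RB s a) s ≤ V πA RA s := by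
      intro n
      induction n with
      | zero => intro _ _ s hs; omega
      | succ n ih =>
        intro π' hv s hs
        by_cases hterm : act s = ∅
        · rw [hVterm _ _ _ hterm, hVterm _ _ _ hterm]
        · have hlt := hacyc s (π' s) (hv s hterm)
          rw [hVrec _ _ _ hterm]
          have h1 := ih π' hv (next s (π' s)) (by omega)
          have h2 : RA s (π' s) + RB s (π' s) + V πA RA (next s (π' s)) ≤ V πA RA s := by
            by_cases hc : (∃ k, step^[k] s₀ = s) ∧ π' s = π s ∧ act s ≠ ∅
            · have hRBs : RB s (π' s) = gap s := by simp only [hRB]; rw [if_pos hc]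
              rw [hRBs, hc.2.1]
              simp only [hgap]
              linarith
            · have hRBs : RB s (π' s) = 0 := by simp only [hRB]; rw [if_neg hc]
              rw [hRBs]
              have := hopt1 s (π' s) hterm (hv s hterm)
              linarith
          linarith
    refine ⟨RB, hnn, ?_, ?_⟩
    · -- cost bound
      have hinner : ∀ s : S, ∑ a, RB s a
          = if (∃ k, step^[k] s₀ = s) ∧ act s ≠ ∅ then gap s else 0 := by
        intro s
        rw [Finset.sum_eq_single (π s)]
        · simp only [hRB]
          by_cases hc : (∃ k, step^[k] s₀ = s) ∧ act s ≠ ∅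
          · rw [if_pos hc]
            exact if_pos ⟨hc.1, by trivial, hc.2⟩
          · rw [if_neg, if_neg hc]
            rintro ⟨h1, _, h3⟩
            exact hc ⟨h1, h3⟩
        · intro a _ ha
          simp only [hRB]
          rw [if_neg]
          rintro ⟨_, h, _⟩
          exact ha h
        · intro h
          exact absurd (Finset.mem_univ _) h
      calc ∑ s, ∑ a, RB s a
          = ∑ s, if (∃ k, step^[k] s₀ = s) ∧ act s ≠ ∅ then gap s else 0 := by
            exact Finset.sum_congr rfl fun s _ => hinner s
        _ = ∑ t ∈ univ.filter (fun t => (∃ k, step^[k] s₀ = t) ∧ act t ≠ ∅), gap t := by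
            rw [Finset.sum_filter]
        _ = V πA RA s₀ - V π RA s₀ := costlem (rank s₀ + 1) s₀ (by omega)
        _ ≤ B := by linarith
    · intro π' hv
      have h1 := mainlem (rank s₀ + 1) π' hv s₀ (by omega)
      have h2 := eqlem (rank s₀ + 1) s₀ (by omega) ⟨0, rfl⟩
      linarith
end

section
/- In any DDP, for every policy π, the minimum of the total cost ∑_{(s,a)} R^B(s,a) over all bonus functions R^B such that V(π, R^A+R^B) ≥ V(π', R^A+R^B) for every policy π' is attained, and this minimum equals V(π^A, R^A) − V(π, R^A). -/
open Finset

section AuxDDP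
variable {S A : Type}

open Classical in
/-- One step of a policy, staying put at terminal states. -/
noncomputable def ddpStep (act : S → Finset A) (next : S → A → S) (π : S → A) (t : S) : S :=
  if act t = ∅ then t else next t (π t)

noncomputable def ddpTraj (act : S → Finset A) (next : S → A → S) (π : S → A) (s₀ : S) :
    ℕ → S := fun n => Nat.rec s₀ (fun _ t => ddpStep act next π t) n

lemma ddpTraj_succ (act : S → Finset A) (next : S → A → S) (π : S → A) (s₀ : S) (n : ℕ) :
    ddpTraj act next π s₀ (n+1) = ddpStep act next π (ddpTraj act next π s₀ n) := rfl

lemma ddpTraj_succ_of_nonterm (act : S → Finset A) (next : S → A → S) (π : S → A) (s₀ : S)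
    (n : ℕ) (h : act (ddpTraj act next π s₀ n) ≠ ∅) :
    ddpTraj act next π s₀ (n+1)
      = next (ddpTraj act next π s₀ n) (π (ddpTraj act next π s₀ n)) := by
  rw [ddpTraj_succ]; unfold ddpStep; rw [if_neg h]

variable (act : S → Finset A) (next : S → A → S) (rank : S → ℕ)
  (hacyc : ∀ s, ∀ a ∈ act s, rank (next s a) < rank s)
  (V : (S → A) → (S → A → ℝ) → S → ℝ)
  (hVterm : ∀ (π : S → A) (R : S → A → ℝ) (s : S), act s = ∅ → V π R s = 0)
  (hVrec : ∀ (π : S → A) (R : S → A → ℝ) (s : S), act s ≠ ∅ →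
      V π R s = R s (π s) + V π R (next s (π s)))

include hacyc hVterm hVrec

/-- Additivity of the value function in the reward. -/
lemma ddp_vAdd (π : S → A) (hπ : ∀ s, act s ≠ ∅ → π s ∈ act s)
    (R1 R2 : S → A → ℝ) (s : S) :
    V π (fun s a => R1 s a + R2 s a) s = V π R1 s + V π R2 s := by
  suffices h : ∀ n s, rank s < n →
      V π (fun s a => R1 s a + R2 s a) s = V π R1 s + V π R2 s from
    h (rank s + 1) s (Nat.lt_succ_self _)
  intro n
  induction n with
  | zero => intro s hs; omega
  | succ n ih =>
    intro s hs
    by_cases hterm : act s = ∅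
    · rw [hVterm _ _ _ hterm, hVterm _ _ _ hterm, hVterm _ _ _ hterm]; ring
    · rw [hVrec _ _ _ hterm, hVrec _ _ _ hterm, hVrec _ _ _ hterm,
        ih _ (by have := hacyc s (π s) (hπ s hterm); omega)]
      ring

/-- Nonnegativity of the value of a nonnegative reward. -/
lemma ddp_vNonneg (π : S → A) (hπ : ∀ s, act s ≠ ∅ → π s ∈ act s)
    (R : S → A → ℝ) (hR : ∀ s a, 0 ≤ R s a) (s : S) : 0 ≤ V π R s := by
  suffices h : ∀ n s, rank s < n → 0 ≤ V π R s from h (rank s + 1) s (Nat.lt_succ_self _)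
  intro n
  induction n with
  | zero => intro s hs; omega
  | succ n ih =>
    intro s hs
    by_cases hterm : act s = ∅
    · rw [hVterm _ _ _ hterm]
    · rw [hVrec _ _ _ hterm]
      have := ih (next s (π s)) (by have := hacyc s (π s) (hπ s hterm); omega)
      have := hR s (π s)
      linarith

/-- Value only depends on the policy at states of smaller or equal rank. -/
lemma ddp_vAgree (π₁ π₂ : S → A) (hπ₁ : ∀ s, act s ≠ ∅ → π₁ s ∈ act s)
    (R : S → A → ℝ) (s : S) (hag : ∀ t, rank t ≤ rank s → π₁ t = π₂ t) :
    V π₁ R s = V π₂ R s := by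
  suffices h : ∀ n s, rank s < n → (∀ t, rank t ≤ rank s → π₁ t = π₂ t) →
      V π₁ R s = V π₂ R s from h (rank s + 1) s (Nat.lt_succ_self _) hag
  intro n
  induction n with
  | zero => intro s hs; omega
  | succ n ih =>
    intro s hs hag'
    by_cases hterm : act s = ∅
    · rw [hVterm _ _ _ hterm, hVterm _ _ _ hterm]
    · have he : π₁ s = π₂ s := hag' s le_rfl
      have hlt := hacyc s (π₁ s) (hπ₁ s hterm)
      rw [hVrec _ _ _ hterm, hVrec _ _ _ hterm, ← he,
        ih (next s (π₁ s)) (by omega) (fun t ht => hag' t (by omega))]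

/-- Bellman optimality inequality for the agent-optimal policy. -/
lemma ddp_bellman (RA : S → A → ℝ) (πA : S → A) (hπA : ∀ s, act s ≠ ∅ → πA s ∈ act s)
    (hπAopt : ∀ π : S → A, (∀ s, act s ≠ ∅ → π s ∈ act s) → ∀ s, V π RA s ≤ V πA RA s)
    (s : S) (a : A) (ha : a ∈ act s) :
    RA s a + V πA RA (next s a) ≤ V πA RA s := by
  classical
  set π'' : S → A := fun t => if t = s then a else πA t with hπ''
  have hval : ∀ t, act t ≠ ∅ → π'' t ∈ act t := by
    intro t ht
    by_cases h : t = s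
    · simp [hπ'', h, ha]
    · simp [hπ'', h, hπA t ht]
  have hterm : act s ≠ ∅ := by
    intro h; rw [h] at ha; exact absurd ha (notMem_empty a)
  have h1 : V π'' RA s = RA s a + V π'' RA (next s a) := by
    have := hVrec π'' RA s hterm
    simpa [hπ''] using this
  have h2 : V π'' RA (next s a) = V πA RA (next s a) := by
    refine ddp_vAgree act next rank hacyc V hVterm hVrec π'' πA hval RA (next s a) ?_
    intro t ht
    have hlt := hacyc s a ha
    have : t ≠ s := by intro h; subst h; omega
    simp [hπ'', this]
  have h3 := hπAopt π'' hval s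
  rw [h1, h2] at h3
  exact h3

/-- Upper bound: any policy's value under `RA + RB` is at most `V πA RA`. -/
lemma ddp_upper (RA RB : S → A → ℝ) (πA : S → A)
    (key : ∀ s, ∀ a ∈ act s, RA s a + RB s a + V πA RA (next s a) ≤ V πA RA s)
    (π' : S → A) (hπ' : ∀ s, act s ≠ ∅ → π' s ∈ act s) (s : S) :
    V π' (fun s a => RA s a + RB s a) s ≤ V πA RA s := by
  suffices h : ∀ n s, rank s < n → V π' (fun s a => RA s a + RB s a) s ≤ V πA RA s from
    h (rank s + 1) s (Nat.lt_succ_self _)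
  intro n
  induction n with
  | zero => intro s hs; omega
  | succ n ih =>
    intro s hs
    by_cases hterm : act s = ∅
    · rw [hVterm _ _ _ hterm, hVterm _ _ _ hterm]
    · have ha := hπ' s hterm
      have hlt := hacyc s (π' s) ha
      rw [hVrec _ _ _ hterm]
      have h1 := ih (next s (π' s)) (by omega)
      have h2 := key s (π' s) ha
      show RA s (π' s) + RB s (π' s) + V π' (fun s a => RA s a + RB s a) (next s (π' s))
        ≤ V πA RA s
      linarith

/-- Value as a sum along the trajectory. -/
lemma ddp_vTraj (π : S → A) (hπ : ∀ s, act s ≠ ∅ → π s ∈ act s)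
    (R : S → A → ℝ) (s₀ : S) (T : ℕ)
    (hTterm : act (ddpTraj act next π s₀ T) = ∅)
    (hTnon : ∀ n < T, act (ddpTraj act next π s₀ n) ≠ ∅) :
    ∀ k, k ≤ T → V π R (ddpTraj act next π s₀ k)
      = ∑ n ∈ Finset.Ico k T, R (ddpTraj act next π s₀ n) (π (ddpTraj act next π s₀ n)) := by
  suffices h : ∀ d k, T - k ≤ d → k ≤ T → V π R (ddpTraj act next π s₀ k)
      = ∑ n ∈ Finset.Ico k T, R (ddpTraj act next π s₀ n) (π (ddpTraj act next π s₀ n)) from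
    fun k hk => h T k (by omega) hk
  intro d
  induction d with
  | zero =>
    intro k hd hk
    have hkT : k = T := by omega
    subst hkT
    rw [hVterm _ _ _ hTterm]
    simp
  | succ d ih =>
    intro k hd hk
    rcases Nat.eq_or_lt_of_le hk with hkT | hkT
    · subst hkT
      rw [hVterm _ _ _ hTterm]
      simp
    · have hnt := hTnon k hkT
      have hstep := ddpTraj_succ_of_nonterm act next π s₀ k hnt
      rw [hVrec _ _ _ hnt, ← hstep, ih (k+1) (by omega) (by omega),
        Finset.sum_eq_sum_Ico_succ_bot hkT]
end AuxDDP

/-- in a DDP, the minimum total cost of a bonus function implementing a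
policy `π` is attained and equals `V(π^A, R^A) − V(π, R^A)`. -/
theorem stmt_3 {S A : Type} [Fintype S] [Fintype A]
    (s₀ : S) (act : S → Finset A) (next : S → A → S)
    (rank : S → ℕ) (hacyc : ∀ s, ∀ a ∈ act s, rank (next s a) < rank s)
    (V : (S → A) → (S → A → ℝ) → S → ℝ)
    (hVterm : ∀ (π : S → A) (R : S → A → ℝ) (s : S), act s = ∅ → V π R s = 0)
    (hVrec : ∀ (π : S → A) (R : S → A → ℝ) (s : S), act s ≠ ∅ →
      V π R s = R s (π s) + V π R (next s (π s)))
    (RA : S → A → ℝ)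
    (πA : S → A) (hπA : ∀ s, act s ≠ ∅ → πA s ∈ act s)
    (hπAopt : ∀ π : S → A, (∀ s, act s ≠ ∅ → π s ∈ act s) → ∀ s, V π RA s ≤ V πA RA s)
    (π : S → A) (hπ : ∀ s, act s ≠ ∅ → π s ∈ act s) :
    ∃ RB : S → A → ℝ, (∀ s a, 0 ≤ RB s a) ∧
      (∀ π' : S → A, (∀ s, act s ≠ ∅ → π' s ∈ act s) →
        V π' (fun s a => RA s a + RB s a) s₀ ≤ V π (fun s a => RA s a + RB s a) s₀) ∧
      (∑ s, ∑ a, RB s a) = V πA RA s₀ - V π RA s₀ ∧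
      (∀ RB' : S → A → ℝ, (∀ s a, 0 ≤ RB' s a) →
        (∀ π' : S → A, (∀ s, act s ≠ ∅ → π' s ∈ act s) →
          V π' (fun s a => RA s a + RB' s a) s₀ ≤ V π (fun s a => RA s a + RB' s a) s₀) →
        (∑ s, ∑ a, RB s a) ≤ ∑ s, ∑ a, RB' s a) := by
  classical
  set f : ℕ → S := ddpTraj act next π s₀ with hf
  have hstep : ∀ n, act (f n) ≠ ∅ → f (n+1) = next (f n) (π (f n)) :=
    fun n h => ddpTraj_succ_of_nonterm act next π s₀ n h
  have hdec : ∀ n, act (f n) ≠ ∅ → rank (f (n+1)) < rank (f n) := by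
    intro n h
    rw [hstep n h]
    exact hacyc _ _ (hπ _ h)
  have hf0 : f 0 = s₀ := rfl
  -- the trajectory reaches a terminal state
  have hex : ∃ n, act (f n) = ∅ := by
    by_contra hcon
    push_neg at hcon
    have hbound : ∀ n, rank (f n) + n ≤ rank s₀ := by
      intro n
      induction n with
      | zero => simp [hf0]
      | succ n ih =>
        have := hdec n (Finset.nonempty_iff_ne_empty.mp (hcon n))
        omega
    have := hbound (rank s₀ + 1)
    omega
  set T := Nat.find hex with hT
  have hTterm : act (f T) = ∅ := Nat.find_spec hex
  have hTnon : ∀ n < T, act (f n) ≠ ∅ := fun n hn => Nat.find_min hex hn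
  -- ranks strictly decrease along the trajectory, so `f` is injective on `range T`
  have hmono : ∀ n, n ≤ T → ∀ m, m < n → rank (f n) < rank (f m) := by
    intro n
    induction n with
    | zero => omega
    | succ n ih =>
      intro hn m hm
      have h1 : rank (f (n+1)) < rank (f n) := hdec n (hTnon n (by omega))
      rcases Nat.lt_succ_iff_lt_or_eq.mp hm with h | h
      · exact h1.trans (ih (by omega) m h)
      · rw [h]; exact h1
  have hinj : ∀ x ∈ Finset.range T, ∀ y ∈ Finset.range T, f x = f y → x = y := by
    intro x hx y hy hxy
    simp only [Finset.mem_range] at hx hy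
    by_contra hne
    rcases Nat.lt_or_ge x y with h | h
    · have := hmono y (by omega) x h
      rw [hxy] at this
      omega
    · have hxy' : y < x := by omega
      have := hmono x (by omega) y hxy'
      rw [hxy] at this
      omega
  -- the bonus: the Bellman gap of πA, placed along the trajectory of π
  set b : S → ℝ := fun s => V πA RA s - RA s (π s) - V πA RA (next s (π s)) with hb
  set onT : S → Prop := fun s => ∃ n, n < T ∧ f n = s with honT
  set RB : S → A → ℝ := fun s a => if onT s ∧ a = π s then b s else 0 with hRB
  have bellman := ddp_bellman act next rank hacyc V hVterm hVrec RA πA hπA hπAopt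
  have hbnn : ∀ s, onT s → 0 ≤ b s := by
    rintro s ⟨n, hn, rfl⟩
    have hnt := hTnon n hn
    have := bellman (f n) (π (f n)) (hπ _ hnt)
    simp only [hb]
    linarith
  have hRBnn : ∀ s a, 0 ≤ RB s a := by
    intro s a
    simp only [hRB]
    split_ifs with h
    · exact hbnn s h.1
    · exact le_rfl
  -- value of π under any reward as a sum along the trajectory
  have hvtraj : ∀ R : S → A → ℝ, V π R s₀ = ∑ n ∈ Finset.range T, R (f n) (π (f n)) := by
    intro R
    have := ddp_vTraj act next rank hacyc V hVterm hVrec π hπ R s₀ T hTterm hTnon 0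
      (Nat.zero_le _)
    rw [Finset.range_eq_Ico]
    exact this
  -- telescoping sum of the gaps
  have htel : ∑ n ∈ Finset.range T, b (f n) = V πA RA s₀ - V π RA s₀ := by
    have heach : ∀ n ∈ Finset.range T, b (f n)
        = (fun k => V πA RA (f k) - V π RA (f k)) n
          - (fun k => V πA RA (f k) - V π RA (f k)) (n+1) := by
      intro n hn
      simp only [Finset.mem_range] at hn
      have hnt := hTnon n hn
      have h1 := hVrec π RA (f n) hnt
      rw [← hstep n hnt] at h1
      simp only [hb]
      rw [← hstep n hnt]
      linarith
    rw [Finset.sum_congr rfl heach, Finset.sum_range_sub']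
    have h2 : V πA RA (f T) = 0 := hVterm _ _ _ hTterm
    have h3 : V π RA (f T) = 0 := hVterm _ _ _ hTterm
    rw [hf0] at *
    rw [h2, h3]
    ring
  -- value of π under RB
  have hVRB : V π RB s₀ = V πA RA s₀ - V π RA s₀ := by
    rw [hvtraj RB, ← htel]
    refine Finset.sum_congr rfl fun n hn => ?_
    simp only [Finset.mem_range] at hn
    show (if onT (f n) ∧ π (f n) = π (f n) then b (f n) else 0) = b (f n)
    rw [if_pos ⟨⟨n, hn, rfl⟩, rfl⟩]
  -- key inequality for the upper bound
  have key : ∀ s, ∀ a ∈ act s, RA s a + RB s a + V πA RA (next s a) ≤ V πA RA s := by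
    intro s a ha
    by_cases hc : onT s ∧ a = π s
    · simp only [hRB]
      rw [if_pos hc, hc.2, hb]
      dsimp only
      linarith
    · simp only [hRB]
      rw [if_neg hc]
      have := bellman s a ha
      linarith
  have hVπRB : V π (fun s a => RA s a + RB s a) s₀ = V πA RA s₀ := by
    rw [ddp_vAdd act next rank hacyc V hVterm hVrec π hπ RA RB s₀, hVRB]
    ring
  have hinner : ∀ s : S, ∑ a, RB s a = if onT s then b s else 0 := by
    intro s
    by_cases h : onT s
    · rw [if_pos h]
      have hall : ∀ a : A, RB s a = if a = π s then b s else 0 := by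
        intro a
        show (if onT s ∧ a = π s then b s else 0) = _
        by_cases h2 : a = π s
        · rw [if_pos ⟨h, h2⟩, if_pos h2]
        · rw [if_neg (fun hc => h2 hc.2), if_neg h2]
      rw [Finset.sum_congr rfl fun a _ => hall a]
      simp
    · rw [if_neg h]
      refine Finset.sum_eq_zero fun a _ => ?_
      show (if onT s ∧ a = π s then b s else 0) = 0
      rw [if_neg (fun hc => h hc.1)]
  have hcost : (∑ s, ∑ a, RB s a) = V πA RA s₀ - V π RA s₀ := by
    calc ∑ s, ∑ a, RB s a = ∑ s, (if onT s then b s else 0) :=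
          Finset.sum_congr rfl fun s _ => hinner s
      _ = ∑ s ∈ Finset.univ.filter onT, b s := by
          rw [Finset.sum_filter]
      _ = ∑ s ∈ (Finset.range T).image f, b s := by
          congr 1
          ext s
          simp [honT]
      _ = ∑ n ∈ Finset.range T, b (f n) := Finset.sum_image hinj
      _ = V πA RA s₀ - V π RA s₀ := htel
  refine ⟨RB, hRBnn, ?_, hcost, ?_⟩
  · intro π' hπ'
    rw [hVπRB]
    exact ddp_upper act next rank hacyc V hVterm hVrec RA RB πA key π' hπ' s₀
  · -- minimality
    intro RB' hRB' himpl
    have h1 := himpl πA hπA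
    rw [ddp_vAdd act next rank hacyc V hVterm hVrec πA hπA RA RB' s₀,
      ddp_vAdd act next rank hacyc V hVterm hVrec π hπ RA RB' s₀] at h1
    have h2 : 0 ≤ V πA RB' s₀ :=
      ddp_vNonneg act next rank hacyc V hVterm hVrec πA hπA RB' hRB' s₀
    have h3 : V π RB' s₀ = ∑ n ∈ Finset.range T, RB' (f n) (π (f n)) := hvtraj RB'
    have h4 : ∑ n ∈ Finset.range T, RB' (f n) (π (f n)) ≤ ∑ s, ∑ a, RB' s a := by
      calc ∑ n ∈ Finset.range T, RB' (f n) (π (f n))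
          = ∑ s ∈ (Finset.range T).image f, RB' s (π s) := by
            rw [Finset.sum_image hinj]
        _ ≤ ∑ s, RB' s (π s) :=
            Finset.sum_le_sum_of_subset_of_nonneg (Finset.subset_univ _)
              (fun s _ _ => hRB' s (π s))
        _ ≤ ∑ s, ∑ a, RB' s a :=
            Finset.sum_le_sum fun s _ =>
              Finset.single_le_sum (fun a _ => hRB' s a) (Finset.mem_univ (π s))
    rw [hcost]
    linarith
end

section
/- In a finite acyclic MDP, let s' be a non-terminal state, let a ∈ A(s'), and let π be the single-deviation policy with π(s) = π^A(s) for every state s ≠ s' and π(s') = a. Define the bonus function R^B by R^B(s',a) = V_{s'}(π^A, R^A) − Q^{π^A}(s', a, R^A) and R^B = 0 on every other state-action pair. Then V_s(π, R^A + R^B) = V_s(π^A, R^A) for every state s, and π is everywhere-optimal for R^A + R^B. -/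
open Finset

/-- in a finite acyclic MDP, the single-deviation policy with its
advantage-based bonus yields the agent his no-bonus optimal values everywhere, and the
deviation policy is everywhere-optimal for `R^A + R^B`. -/
theorem stmt_4 {S A : Type} [Fintype S] [Fintype A] [DecidableEq S] [DecidableEq A]
    (act : S → Finset A)
    (P : S → A → S → ℝ)
    (hP0 : ∀ s a t, 0 ≤ P s a t)
    (hP1 : ∀ s, ∀ a ∈ act s, ∑ t, P s a t = 1)
    (rank : S → ℕ)
    (hacyc : ∀ s, ∀ a ∈ act s, ∀ t, 0 < P s a t → rank t < rank s)
    (V : (S → A) → (S → A → ℝ) → S → ℝ)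
    (hVterm : ∀ (π : S → A) (R : S → A → ℝ) (s : S), act s = ∅ → V π R s = 0)
    (hVrec : ∀ (π : S → A) (R : S → A → ℝ) (s : S), act s ≠ ∅ →
      V π R s = R s (π s) + ∑ t, P s (π s) t * V π R t)
    (RA : S → A → ℝ)
    (πA : S → A) (hπA : ∀ s, act s ≠ ∅ → πA s ∈ act s)
    (hπAopt : ∀ π : S → A, (∀ s, act s ≠ ∅ → π s ∈ act s) → ∀ s, V π RA s ≤ V πA RA s)
    (s' : S) (hs' : act s' ≠ ∅) (a : A) (ha : a ∈ act s')
    (π : S → A) (hπdef : ∀ s, π s = if s = s' then a else πA s)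
    (RB : S → A → ℝ)
    (hRB : ∀ s b, RB s b =
      if s = s' ∧ b = a then
        V πA RA s' - (RA s' a + ∑ t, P s' a t * V πA RA t)
      else 0) :
    (∀ s, V π (fun s b => RA s b + RB s b) s = V πA RA s) ∧
    (∀ π' : S → A, (∀ s, act s ≠ ∅ → π' s ∈ act s) → ∀ s,
      V π' (fun s b => RA s b + RB s b) s ≤ V π (fun s b => RA s b + RB s b) s) := by
  classical
  set R' : S → A → ℝ := fun s b => RA s b + RB s b with hR'
  -- agreement lemma: two policies agreeing below rank n have equal values below rank n
  have agree : ∀ (π1 π2 : S → A) (R : S → A → ℝ),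
      (∀ u, act u ≠ ∅ → π2 u ∈ act u) →
      ∀ n : ℕ, (∀ t, rank t < n → π1 t = π2 t) →
      ∀ s, rank s < n → V π1 R s = V π2 R s := by
    intro π1 π2 R hval n
    induction n with
    | zero => intro _ s hs; omega
    | succ n ih =>
      intro hag s hs
      by_cases hterm : act s = ∅
      · rw [hVterm _ _ _ hterm, hVterm _ _ _ hterm]
      · rw [hVrec _ _ _ hterm, hVrec _ _ _ hterm, hag s hs]
        congr 1
        apply Finset.sum_congr rfl
        intro t _
        rcases (hP0 s (π2 s) t).eq_or_lt with h0 | hpos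
        · rw [← h0, zero_mul, zero_mul]
        · have hrt : rank t < rank s := hacyc s (π2 s) (hval s hterm) t hpos
          rw [ih (fun u hu => hag u (by omega)) t (by omega)]
  -- Q ≤ V for the optimal policy πA
  have QleV : ∀ s, act s ≠ ∅ → ∀ b ∈ act s,
      RA s b + ∑ t, P s b t * V πA RA t ≤ V πA RA s := by
    intro s hterm b hb
    set σ : S → A := fun u => if u = s then b else πA u with hσ
    have hσval : ∀ u, act u ≠ ∅ → σ u ∈ act u := by
      intro u hu
      by_cases h : u = s
      · simp only [hσ, if_pos h]; rw [h]; exact hb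
      · simp only [hσ, if_neg h]; exact hπA u hu
    have hσs : σ s = b := by simp [hσ]
    have hVσ : V σ RA s = RA s b + ∑ t, P s b t * V πA RA t := by
      rw [hVrec σ RA s hterm, hσs]
      congr 1
      apply Finset.sum_congr rfl
      intro t _
      rcases (hP0 s b t).eq_or_lt with h0 | hpos
      · rw [← h0, zero_mul, zero_mul]
      · have hrt : rank t < rank s := hacyc s b hb t hpos
        rw [agree σ πA RA hπA (rank s)
          (fun u hu => by
            have hus : u ≠ s := by rintro rfl; omega
            simp [hσ, hus]) t hrt]
    rw [← hVσ]
    exact hπAopt σ hσval s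
  -- membership for π
  have hπmem : ∀ s, act s ≠ ∅ → π s ∈ act s := by
    intro s hterm
    rw [hπdef]
    by_cases h : s = s'
    · rw [if_pos h, h]; exact ha
    · rw [if_neg h]; exact hπA s hterm
  -- claim 1: V π R' = V πA RA
  have claim1 : ∀ n : ℕ, ∀ s, rank s < n → V π R' s = V πA RA s := by
    intro n
    induction n with
    | zero => intro s hs; omega
    | succ n ih =>
      intro s hs
      by_cases hterm : act s = ∅
      · rw [hVterm _ _ _ hterm, hVterm _ _ _ hterm]
      · have hsum : ∑ t, P s (π s) t * V π R' t = ∑ t, P s (π s) t * V πA RA t := by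
          apply Finset.sum_congr rfl
          intro t _
          rcases (hP0 s (π s) t).eq_or_lt with h0 | hpos
          · rw [← h0, zero_mul, zero_mul]
          · have hrt : rank t < rank s := hacyc s (π s) (hπmem s hterm) t hpos
            rw [ih t (by omega)]
        rw [hVrec π R' s hterm, hsum]
        by_cases h : s = s'
        · subst h
          have hπs : π s = a := by rw [hπdef]; simp
          rw [hπs]
          have : R' s a = RA s a + RB s a := rfl
          rw [this, hRB, if_pos ⟨rfl, rfl⟩]
          ring
        · have hπs : π s = πA s := by rw [hπdef, if_neg h]
          rw [hπs]
          have : R' s (πA s) = RA s (πA s) + RB s (πA s) := rfl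
          rw [this, hRB]
          rw [if_neg (by intro hc; exact h hc.1), add_zero]
          rw [hVrec πA RA s hterm]
  -- claim 2: V π' R' ≤ V πA RA for every valid π'
  have claim2 : ∀ π' : S → A, (∀ u, act u ≠ ∅ → π' u ∈ act u) →
      ∀ n : ℕ, ∀ s, rank s < n → V π' R' s ≤ V πA RA s := by
    intro π' hval n
    induction n with
    | zero => intro s hs; omega
    | succ n ih =>
      intro s hs
      by_cases hterm : act s = ∅
      · rw [hVterm _ _ _ hterm, hVterm _ _ _ hterm]
      · have hbmem : π' s ∈ act s := hval s hterm
        have hsum : ∑ t, P s (π' s) t * V π' R' t ≤ ∑ t, P s (π' s) t * V πA RA t := by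
          apply Finset.sum_le_sum
          intro t _
          rcases (hP0 s (π' s) t).eq_or_lt with h0 | hpos
          · rw [← h0, zero_mul, zero_mul]
          · have hrt : rank t < rank s := hacyc s (π' s) hbmem t hpos
            exact mul_le_mul_of_nonneg_left (ih t (by omega)) (hP0 s (π' s) t)
        rw [hVrec π' R' s hterm]
        have hstep : R' s (π' s) + ∑ t, P s (π' s) t * V πA RA t ≤ V πA RA s := by
          have hR's : R' s (π' s) = RA s (π' s) + RB s (π' s) := rfl
          by_cases hcase : s = s' ∧ π' s = a
          · obtain ⟨hc1, hc2⟩ := hcase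
            subst hc1
            rw [hR's, hRB, if_pos ⟨rfl, hc2⟩, hc2]
            have : RA s a + (V πA RA s - (RA s a + ∑ t, P s a t * V πA RA t)) +
                ∑ t, P s a t * V πA RA t = V πA RA s := by ring
            rw [this]
          · rw [hR's, hRB, if_neg hcase, add_zero]
            exact QleV s hterm (π' s) hbmem
        calc R' s (π' s) + ∑ t, P s (π' s) t * V π' R' t
            ≤ R' s (π' s) + ∑ t, P s (π' s) t * V πA RA t := by linarith
          _ ≤ V πA RA s := hstep
  constructor
  · intro s
    exact claim1 (rank s + 1) s (Nat.lt_succ_self _)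
  · intro π' hval s
    rw [claim1 (rank s + 1) s (Nat.lt_succ_self _)]
    exact claim2 π' hval (rank s + 1) s (Nat.lt_succ_self _)
end

section
/- In a finite acyclic MDP, for every policy π the advantage-based bonus R^B_π satisfies: (i) π is everywhere-optimal for R^A + R^B_π; and (ii) V_s(π, R^A + R^B_π) = V_s(π^A, R^A) for every state s, i.e., with this bonus the agent's optimal value from every state equals his optimal value without any bonus. -/
open Finset

/-- in a finite acyclic MDP, the advantage-based bonus of any policy `π`
makes `π` everywhere-optimal for `R^A + R^B_π`, and under it the agent's value from every
state equals his optimal value without any bonus. -/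
theorem stmt_5 {S A : Type} [Fintype S] [Fintype A] [DecidableEq S] [DecidableEq A]
    (act : S → Finset A)
    (P : S → A → S → ℝ)
    (hP0 : ∀ s a t, 0 ≤ P s a t)
    (hP1 : ∀ s, ∀ a ∈ act s, ∑ t, P s a t = 1)
    (rank : S → ℕ)
    (hacyc : ∀ s, ∀ a ∈ act s, ∀ t, 0 < P s a t → rank t < rank s)
    (V : (S → A) → (S → A → ℝ) → S → ℝ)
    (hVterm : ∀ (π : S → A) (R : S → A → ℝ) (s : S), act s = ∅ → V π R s = 0)
    (hVrec : ∀ (π : S → A) (R : S → A → ℝ) (s : S), act s ≠ ∅ →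
      V π R s = R s (π s) + ∑ t, P s (π s) t * V π R t)
    (RA : S → A → ℝ)
    (πA : S → A) (hπA : ∀ s, act s ≠ ∅ → πA s ∈ act s)
    (hπAopt : ∀ π : S → A, (∀ s, act s ≠ ∅ → π s ∈ act s) → ∀ s, V π RA s ≤ V πA RA s)
    (π : S → A) (hπ : ∀ s, act s ≠ ∅ → π s ∈ act s)
    (RBπ : S → A → ℝ)
    (hRBπ : ∀ s b, RBπ s b =
      if act s ≠ ∅ ∧ b = π s then
        V πA RA s - (RA s b + ∑ t, P s b t * V πA RA t)
      else 0) :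
    (∀ π' : S → A, (∀ s, act s ≠ ∅ → π' s ∈ act s) → ∀ s,
      V π' (fun s b => RA s b + RBπ s b) s ≤ V π (fun s b => RA s b + RBπ s b) s) ∧
    (∀ s, V π (fun s b => RA s b + RBπ s b) s = V πA RA s) := by
  -- Lemma: V depends on the (valid) policy only at states of rank ≤ rank s.
  have agree : ∀ n : ℕ, ∀ s : S, rank s < n → ∀ π₁ π₂ : S → A, ∀ R : S → A → ℝ,
      (∀ t, act t ≠ ∅ → π₂ t ∈ act t) →
      (∀ t, rank t ≤ rank s → π₁ t = π₂ t) → V π₁ R s = V π₂ R s := by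
    intro n
    induction n with
    | zero => intro s hs; omega
    | succ n ih =>
      intro s hs π₁ π₂ R hval hag
      by_cases hterm : act s = ∅
      · rw [hVterm _ _ _ hterm, hVterm _ _ _ hterm]
      · rw [hVrec _ _ _ hterm, hVrec _ _ _ hterm, hag s le_rfl]
        congr 1
        refine Finset.sum_congr rfl fun t _ => ?_
        rcases (hP0 s (π₂ s) t).eq_or_lt with h0 | hpos
        · rw [← h0]; ring
        · have hrt : rank t < rank s := hacyc s (π₂ s) (hval s hterm) t hpos
          rw [ih t (by omega) π₁ π₂ R hval (fun u hu => hag u (by omega))]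
  -- Part (ii): V π (RA+RB) s = V πA RA s.
  have part2 : ∀ n : ℕ, ∀ s : S, rank s < n →
      V π (fun s b => RA s b + RBπ s b) s = V πA RA s := by
    intro n
    induction n with
    | zero => intro s hs; omega
    | succ n ih =>
      intro s hs
      by_cases hterm : act s = ∅
      · rw [hVterm _ _ _ hterm, hVterm _ _ _ hterm]
      · rw [hVrec _ _ _ hterm]
        have hsum : ∑ t, P s (π s) t * V π (fun s b => RA s b + RBπ s b) t
            = ∑ t, P s (π s) t * V πA RA t := by
          refine Finset.sum_congr rfl fun t _ => ?_
          rcases (hP0 s (π s) t).eq_or_lt with h0 | hpos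
          · rw [← h0]; ring
          · have hrt : rank t < rank s := hacyc s (π s) (hπ s hterm) t hpos
            rw [ih t (by omega)]
        rw [hsum, hRBπ s (π s), if_pos ⟨hterm, rfl⟩]
        ring
  constructor
  · -- Part (i)
    intro π' hπ' s
    rw [(part2 (rank s + 1) s (by omega) : _)]
    -- suffices to show V π' (RA+RB) s ≤ V πA RA s for all s, by strong induction
    suffices h : ∀ n : ℕ, ∀ s : S, rank s < n →
        V π' (fun s b => RA s b + RBπ s b) s ≤ V πA RA s by
      exact h (rank s + 1) s (by omega)
    intro n
    induction n with
    | zero => intro s hs; omega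
    | succ n ih =>
      intro s hs
      by_cases hterm : act s = ∅
      · rw [hVterm _ _ _ hterm, hVterm _ _ _ hterm]
      · rw [hVrec _ _ _ hterm]
        have hsum : ∑ t, P s (π' s) t * V π' (fun s b => RA s b + RBπ s b) t
            ≤ ∑ t, P s (π' s) t * V πA RA t := by
          refine Finset.sum_le_sum fun t _ => ?_
          rcases (hP0 s (π' s) t).eq_or_lt with h0 | hpos
          · rw [← h0]; simp
          · have hrt : rank t < rank s := hacyc s (π' s) (hπ' s hterm) t hpos
            exact mul_le_mul_of_nonneg_left (ih t (by omega)) (hP0 s (π' s) t)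
        by_cases hcase : π' s = π s
        · rw [hRBπ s (π' s), if_pos ⟨hterm, hcase⟩]
          calc RA s (π' s) + (V πA RA s - (RA s (π' s) + ∑ t, P s (π' s) t * V πA RA t))
                + ∑ t, P s (π' s) t * V π' (fun s b => RA s b + RBπ s b) t
              ≤ RA s (π' s) + (V πA RA s - (RA s (π' s) + ∑ t, P s (π' s) t * V πA RA t))
                + ∑ t, P s (π' s) t * V πA RA t := by linarith
            _ = V πA RA s := by ring
        · rw [hRBπ s (π' s), if_neg (by tauto)]
          -- Q^{πA}(s, π' s) ≤ V πA RA s, via the policy update πA[s ↦ π' s]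
          set π'' : S → A := Function.update πA s (π' s) with hπ''
          have hval'' : ∀ t, act t ≠ ∅ → π'' t ∈ act t := by
            intro t ht
            by_cases hts : t = s
            · subst hts; simp [hπ'', Function.update_self]; exact hπ' t ht
            · simp [hπ'', Function.update_of_ne hts]; exact hπA t ht
          have hQ : V π'' RA s = RA s (π' s) + ∑ t, P s (π' s) t * V πA RA t := by
            rw [hVrec _ _ _ hterm]
            have hs'' : π'' s = π' s := Function.update_self s (π' s) πA
            rw [hs'']
            congr 1
            refine Finset.sum_congr rfl fun t _ => ?_
            rcases (hP0 s (π' s) t).eq_or_lt with h0 | hpos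
            · rw [← h0]; ring
            · have hrt : rank t < rank s := hacyc s (π' s) (hπ' s hterm) t hpos
              rw [agree (rank t + 1) t (by omega) π'' πA RA hπA
                (fun u hu => Function.update_of_ne (by rintro rfl; omega) _ _)]
          have := hπAopt π'' hval'' s
          rw [hQ] at this
          linarith
  · intro s
    exact part2 (rank s + 1) s (by omega)
end

section
/- In a stochastic tree, for every policy π and every bonus function R such that π is everywhere-optimal for R^A + R, the total cost satisfies ∑_{(s,a)} R(s,a) ≥ ∑_{(s,a)} R^B_π(s,a) = ∑_{non-terminal s} ( V_s(π^A, R^A) − Q^{π^A}(s, π(s), R^A) ). Consequently the advantage-based bonus R^B_π is a minimal implementation of π: it makes π everywhere-optimal for R^A + R^B_π and has the least total cost among all bonus functions doing so. -/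
open Finset

/-- in a stochastic tree, any bonus function making `π` everywhere-optimal
costs at least as much as the advantage-based bonus `R^B_π`, whose total cost is the sum
over non-terminal states of the local advantages; hence `R^B_π` is a minimal
implementation of `π`. -/
theorem stmt_6 {S A : Type} [Fintype S] [Fintype A] [DecidableEq S] [DecidableEq A]
    (s₀ : S) (act : S → Finset A)
    (P : S → A → S → ℝ)
    (hP0 : ∀ s a t, 0 ≤ P s a t)
    (hP1 : ∀ s, ∀ a ∈ act s, ∑ t, P s a t = 1)
    (rank : S → ℕ)
    (hacyc : ∀ s, ∀ a ∈ act s, ∀ t, 0 < P s a t → rank t < rank s)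
    (htree : ∀ t, t ≠ s₀ → ∃! s, ∃ a ∈ act s, 0 < P s a t)
    (hroot : ∀ s, ∀ a ∈ act s, P s a s₀ = 0)
    (V : (S → A) → (S → A → ℝ) → S → ℝ)
    (hVterm : ∀ (π : S → A) (R : S → A → ℝ) (s : S), act s = ∅ → V π R s = 0)
    (hVrec : ∀ (π : S → A) (R : S → A → ℝ) (s : S), act s ≠ ∅ →
      V π R s = R s (π s) + ∑ t, P s (π s) t * V π R t)
    (RA : S → A → ℝ)
    (πA : S → A) (hπA : ∀ s, act s ≠ ∅ → πA s ∈ act s)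
    (hπAopt : ∀ π : S → A, (∀ s, act s ≠ ∅ → π s ∈ act s) → ∀ s, V π RA s ≤ V πA RA s)
    (π : S → A) (hπ : ∀ s, act s ≠ ∅ → π s ∈ act s)
    (RBπ : S → A → ℝ)
    (hRBπ : ∀ s b, RBπ s b =
      if act s ≠ ∅ ∧ b = π s then
        V πA RA s - (RA s b + ∑ t, P s b t * V πA RA t)
      else 0) :
    (∀ R : S → A → ℝ, (∀ s b, 0 ≤ R s b) →
      (∀ π' : S → A, (∀ s, act s ≠ ∅ → π' s ∈ act s) → ∀ s,
        V π' (fun s b => RA s b + R s b) s ≤ V π (fun s b => RA s b + R s b) s) →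
      (∑ s, ∑ b, RBπ s b) ≤ ∑ s, ∑ b, R s b) ∧
    ((∑ s, ∑ b, RBπ s b) = ∑ s ∈ Finset.univ.filter (fun s => act s ≠ ∅),
      (V πA RA s - (RA s (π s) + ∑ t, P s (π s) t * V πA RA t))) ∧
    (∀ π' : S → A, (∀ s, act s ≠ ∅ → π' s ∈ act s) → ∀ s,
      V π' (fun s b => RA s b + RBπ s b) s ≤ V π (fun s b => RA s b + RBπ s b) s) := by
  classical
  -- Locality: V depends on π only at states of small rank
  have Llocal : ∀ (π₁ π₂ : S → A) (R' : S → A → ℝ),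
      (∀ s, act s ≠ ∅ → π₁ s ∈ act s) →
      ∀ N : ℕ, ∀ s, rank s < N → (∀ u, rank u < N → π₁ u = π₂ u) →
      V π₁ R' s = V π₂ R' s := by
    intro π₁ π₂ R' hv N
    induction N with
    | zero => intro s hs _; omega
    | succ N ih =>
      intro s hs hag
      by_cases hterm : act s = ∅
      · rw [hVterm _ _ _ hterm, hVterm _ _ _ hterm]
      · have hmem : π₁ s ∈ act s := hv s hterm
        have hss : π₁ s = π₂ s := hag s hs
        rw [hVrec _ _ _ hterm, hVrec _ _ _ hterm, ← hss]
        congr 1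
        apply Finset.sum_congr rfl
        intro t _
        by_cases hPt : P s (π₁ s) t = 0
        · rw [hPt]; ring
        · have hpos : 0 < P s (π₁ s) t := lt_of_le_of_ne (hP0 _ _ _) (Ne.symm hPt)
          have hrt : rank t < rank s := hacyc s (π₁ s) hmem t hpos
          rw [ih t (by omega) (fun u hu => hag u (by omega))]
  -- Monotonicity in the reward
  have Lmono : ∀ (π' : S → A) (R1 R2 : S → A → ℝ),
      (∀ s, act s ≠ ∅ → π' s ∈ act s) → (∀ s b, R1 s b ≤ R2 s b) →
      ∀ N : ℕ, ∀ s, rank s < N → V π' R1 s ≤ V π' R2 s := by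
    intro π' R1 R2 hv hle N
    induction N with
    | zero => intro s hs; omega
    | succ N ih =>
      intro s hs
      by_cases hterm : act s = ∅
      · rw [hVterm _ _ _ hterm, hVterm _ _ _ hterm]
      · rw [hVrec _ _ _ hterm, hVrec _ _ _ hterm]
        have h1 := hle s (π' s)
        have h2 : ∑ t, P s (π' s) t * V π' R1 t ≤ ∑ t, P s (π' s) t * V π' R2 t := by
          apply Finset.sum_le_sum
          intro t _
          by_cases hPt : P s (π' s) t = 0
          · rw [hPt]; simp
          · have hpos : 0 < P s (π' s) t := lt_of_le_of_ne (hP0 _ _ _) (Ne.symm hPt)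
            have hrt := hacyc s (π' s) (hv s hterm) t hpos
            exact mul_le_mul_of_nonneg_left (ih t (by omega)) (hP0 _ _ _)
        linarith
  -- Q-values of πA are bounded by V πA
  have LQ : ∀ s, act s ≠ ∅ → ∀ a ∈ act s,
      RA s a + ∑ t, P s a t * V πA RA t ≤ V πA RA s := by
    intro s hterm a ha
    set π'' : S → A := fun u => if u = s then a else πA u with hπ''
    have hv : ∀ u, act u ≠ ∅ → π'' u ∈ act u := by
      intro u hu
      by_cases hus : u = s
      · subst hus; simpa [hπ''] using ha
      · simpa [hπ'', hus] using hπA u hu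
    have hVs : V π'' RA s = RA s a + ∑ t, P s a t * V πA RA t := by
      rw [hVrec _ _ _ hterm]
      have hps : π'' s = a := by simp [hπ'']
      rw [hps]
      congr 1
      apply Finset.sum_congr rfl
      intro t _
      by_cases hPt : P s a t = 0
      · rw [hPt]; ring
      · have hpos : 0 < P s a t := lt_of_le_of_ne (hP0 _ _ _) (Ne.symm hPt)
        have hrt := hacyc s a ha t hpos
        rw [Llocal π'' πA RA hv (rank s) t hrt
          (fun u hu => by simp only [hπ'']; exact if_neg (by rintro rfl; omega))]
    calc RA s a + ∑ t, P s a t * V πA RA t = V π'' RA s := hVs.symm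
      _ ≤ V πA RA s := hπAopt π'' hv s
  -- V π (RA + RBπ) = V πA RA everywhere
  have Leq : ∀ N : ℕ, ∀ s, rank s < N →
      V π (fun u b => RA u b + RBπ u b) s = V πA RA s := by
    intro N
    induction N with
    | zero => intro s hs; omega
    | succ N ih =>
      intro s hs
      by_cases hterm : act s = ∅
      · rw [hVterm _ _ _ hterm, hVterm _ _ _ hterm]
      · have h1 : V π (fun u b => RA u b + RBπ u b) s
            = (RA s (π s) + RBπ s (π s))
              + ∑ t, P s (π s) t * V π (fun u b => RA u b + RBπ u b) t :=
          hVrec π _ s hterm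
        have hb : RBπ s (π s)
            = V πA RA s - (RA s (π s) + ∑ t, P s (π s) t * V πA RA t) := by
          rw [hRBπ, if_pos ⟨hterm, rfl⟩]
        have hsum : ∑ t, P s (π s) t * V π (fun u b => RA u b + RBπ u b) t
            = ∑ t, P s (π s) t * V πA RA t := by
          apply Finset.sum_congr rfl
          intro t _
          by_cases hPt : P s (π s) t = 0
          · rw [hPt]; ring
          · have hpos : 0 < P s (π s) t := lt_of_le_of_ne (hP0 _ _ _) (Ne.symm hPt)
            have hrt := hacyc s (π s) (hπ s hterm) t hpos
            rw [ih t (by omega)]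
        rw [h1, hsum, hb]; ring
  -- any policy's value under RA + RBπ is at most V πA RA
  have Lle : ∀ N : ℕ, ∀ s, rank s < N → ∀ π' : S → A,
      (∀ u, act u ≠ ∅ → π' u ∈ act u) →
      V π' (fun u b => RA u b + RBπ u b) s ≤ V πA RA s := by
    intro N
    induction N with
    | zero => intro s hs; omega
    | succ N ih =>
      intro s hs π' hv'
      by_cases hterm : act s = ∅
      · rw [hVterm _ _ _ hterm, hVterm _ _ _ hterm]
      · have h1 : V π' (fun u b => RA u b + RBπ u b) s
            = (RA s (π' s) + RBπ s (π' s))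
              + ∑ t, P s (π' s) t * V π' (fun u b => RA u b + RBπ u b) t :=
          hVrec π' _ s hterm
        have hsum : ∑ t, P s (π' s) t * V π' (fun u b => RA u b + RBπ u b) t
            ≤ ∑ t, P s (π' s) t * V πA RA t := by
          apply Finset.sum_le_sum
          intro t _
          by_cases hPt : P s (π' s) t = 0
          · rw [hPt]; simp
          · have hpos : 0 < P s (π' s) t := lt_of_le_of_ne (hP0 _ _ _) (Ne.symm hPt)
            have hrt := hacyc s (π' s) (hv' s hterm) t hpos
            exact mul_le_mul_of_nonneg_left (ih t (by omega) π' hv') (hP0 _ _ _)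
        by_cases hps : π' s = π s
        · have hb : RBπ s (π' s)
              = V πA RA s - (RA s (π' s) + ∑ t, P s (π' s) t * V πA RA t) := by
            rw [hRBπ, if_pos ⟨hterm, hps⟩]
          rw [h1, hb]; linarith
        · have hb : RBπ s (π' s) = 0 := by
            rw [hRBπ, if_neg (fun hc => hps hc.2)]
          have hq := LQ s hterm (π' s) (hv' s hterm)
          rw [h1, hb]; linarith
  -- the inner sums of RBπ
  have inner : ∀ s, ∑ b, RBπ s b =
      if act s ≠ ∅ then
        V πA RA s - (RA s (π s) + ∑ t, P s (π s) t * V πA RA t)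
      else 0 := by
    intro s
    by_cases h : act s = ∅
    · rw [if_neg (by simp [h])]
      apply Finset.sum_eq_zero
      intro b _
      rw [hRBπ, if_neg (fun hc => hc.1 h)]
    · rw [if_pos h]
      have : ∀ b ∈ (Finset.univ : Finset A), RBπ s b =
          if b = π s then V πA RA s - (RA s b + ∑ t, P s b t * V πA RA t) else 0 := by
        intro b _
        rw [hRBπ]
        by_cases hb : b = π s
        · rw [if_pos ⟨h, hb⟩, if_pos hb]
        · rw [if_neg (fun hc => hb hc.2), if_neg hb]
      rw [Finset.sum_congr rfl this, Finset.sum_ite_eq' Finset.univ (π s)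
        (fun b => V πA RA s - (RA s b + ∑ t, P s b t * V πA RA t))]
      simp
  have part2 : (∑ s, ∑ b, RBπ s b) = ∑ s ∈ Finset.univ.filter (fun s => act s ≠ ∅),
      (V πA RA s - (RA s (π s) + ∑ t, P s (π s) t * V πA RA t)) := by
    rw [Finset.sum_filter]
    exact Finset.sum_congr rfl (fun s _ => inner s)
  refine ⟨?_, part2, ?_⟩
  · -- minimality
    intro R hR hopt
    have hD : ∀ t, 0 ≤ V π (fun u b => RA u b + R u b) t - V πA RA t := by
      intro t
      have h1 : V πA RA t ≤ V πA (fun u b => RA u b + R u b) t :=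
        Lmono πA RA _ hπA (fun s b => le_add_of_nonneg_right (hR s b))
          (rank t + 1) t (Nat.lt_succ_self _)
      have h2 := hopt πA hπA t
      linarith
    have hDterm : ∀ t, act t = ∅ →
        V π (fun u b => RA u b + R u b) t - V πA RA t = 0 := by
      intro t h; rw [hVterm _ _ _ h, hVterm _ _ _ h]; ring
    have hkey : ∀ s, act s ≠ ∅ → R s (π s) =
        (V πA RA s - (RA s (π s) + ∑ t, P s (π s) t * V πA RA t))
        + (V π (fun u b => RA u b + R u b) s - V πA RA s)
        - ∑ t, P s (π s) t * (V π (fun u b => RA u b + R u b) t - V πA RA t) := by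
      intro s hterm
      have h1 : V π (fun u b => RA u b + R u b) s
          = (RA s (π s) + R s (π s))
            + ∑ t, P s (π s) t * V π (fun u b => RA u b + R u b) t :=
        hVrec π _ s hterm
      have h2 : ∑ t, P s (π s) t * V π (fun u b => RA u b + R u b) t
          = (∑ t, P s (π s) t * V πA RA t)
            + ∑ t, P s (π s) t * (V π (fun u b => RA u b + R u b) t - V πA RA t) := by
        rw [← Finset.sum_add_distrib]
        apply Finset.sum_congr rfl
        intro t _
        ring
      rw [h2] at h1
      linarith
    have hc : ∀ t, (∑ s ∈ Finset.univ.filter (fun s => act s ≠ ∅), P s (π s) t) ≤ 1 := by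
      intro t
      by_cases ht0 : t = s₀
      · have hz : ∑ s ∈ Finset.univ.filter (fun s => act s ≠ ∅), P s (π s) t = 0 :=
          Finset.sum_eq_zero (fun s hs => by
            rw [ht0]; exact hroot s (π s) (hπ s (Finset.mem_filter.mp hs).2))
        rw [hz]; norm_num
      · obtain ⟨s', hs', huniq⟩ := htree t ht0
        obtain ⟨a, ha, hpa⟩ := hs'
        have hs'nt : act s' ≠ ∅ := fun h => by simp [h] at ha
        have hmemNT : s' ∈ Finset.univ.filter (fun s => act s ≠ ∅) :=
          Finset.mem_filter.mpr ⟨Finset.mem_univ _, hs'nt⟩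
        have hsum : ∑ s ∈ Finset.univ.filter (fun s => act s ≠ ∅), P s (π s) t
            = P s' (π s') t := by
          apply Finset.sum_eq_single_of_mem s' hmemNT
          intro s hs hne
          by_contra hno
          have hpos : 0 < P s (π s) t := lt_of_le_of_ne (hP0 _ _ _) (Ne.symm hno)
          exact hne (huniq s ⟨π s, hπ s (Finset.mem_filter.mp hs).2, hpos⟩)
        rw [hsum]
        calc P s' (π s') t ≤ ∑ u, P s' (π s') u :=
              Finset.single_le_sum (f := fun u => P s' (π s') u)
                (fun u _ => hP0 _ _ _) (Finset.mem_univ t)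
          _ = 1 := hP1 s' (π s') (hπ s' hs'nt)
    have hsum1 : ∑ s ∈ Finset.univ.filter (fun s => act s ≠ ∅), R s (π s)
        = (∑ s ∈ Finset.univ.filter (fun s => act s ≠ ∅),
            (V πA RA s - (RA s (π s) + ∑ t, P s (π s) t * V πA RA t)))
          + (∑ s ∈ Finset.univ.filter (fun s => act s ≠ ∅),
            (V π (fun u b => RA u b + R u b) s - V πA RA s))
          - ∑ s ∈ Finset.univ.filter (fun s => act s ≠ ∅),
            ∑ t, P s (π s) t * (V π (fun u b => RA u b + R u b) t - V πA RA t) := by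
      rw [← Finset.sum_add_distrib, ← Finset.sum_sub_distrib]
      apply Finset.sum_congr rfl
      intro s hs
      exact hkey s (Finset.mem_filter.mp hs).2
    have hsum2 : ∑ s ∈ Finset.univ.filter (fun s => act s ≠ ∅),
          ∑ t, P s (π s) t * (V π (fun u b => RA u b + R u b) t - V πA RA t)
        = ∑ t, (∑ s ∈ Finset.univ.filter (fun s => act s ≠ ∅), P s (π s) t)
            * (V π (fun u b => RA u b + R u b) t - V πA RA t) := by
      rw [Finset.sum_comm]
      apply Finset.sum_congr rfl
      intro t _
      rw [Finset.sum_mul]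
    have hsum3 : ∑ t, (∑ s ∈ Finset.univ.filter (fun s => act s ≠ ∅), P s (π s) t)
          * (V π (fun u b => RA u b + R u b) t - V πA RA t)
        ≤ ∑ s ∈ Finset.univ.filter (fun s => act s ≠ ∅),
            (V π (fun u b => RA u b + R u b) s - V πA RA s) := by
      rw [Finset.sum_filter]
      apply Finset.sum_le_sum
      intro t _
      by_cases ht : act t = ∅
      · rw [if_neg (by simp [ht]), hDterm t ht, mul_zero]
      · rw [if_pos ht]
        calc (∑ s ∈ Finset.univ.filter (fun s => act s ≠ ∅), P s (π s) t)
              * (V π (fun u b => RA u b + R u b) t - V πA RA t)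
            ≤ 1 * (V π (fun u b => RA u b + R u b) t - V πA RA t) :=
              mul_le_mul_of_nonneg_right (hc t) (hD t)
          _ = _ := one_mul _
    have hadv : (∑ s ∈ Finset.univ.filter (fun s => act s ≠ ∅),
          (V πA RA s - (RA s (π s) + ∑ t, P s (π s) t * V πA RA t)))
        ≤ ∑ s ∈ Finset.univ.filter (fun s => act s ≠ ∅), R s (π s) := by
      rw [hsum1]; rw [hsum2] at *
      linarith [hsum3]
    have hstep1 : ∑ s ∈ Finset.univ.filter (fun s => act s ≠ ∅), R s (π s)
        ≤ ∑ s ∈ Finset.univ.filter (fun s => act s ≠ ∅), ∑ b, R s b :=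
      Finset.sum_le_sum (fun s _ =>
        Finset.single_le_sum (fun b _ => hR s b) (Finset.mem_univ (π s)))
    have hstep2 : ∑ s ∈ Finset.univ.filter (fun s => act s ≠ ∅), ∑ b, R s b
        ≤ ∑ s, ∑ b, R s b :=
      Finset.sum_le_sum_of_subset_of_nonneg (Finset.filter_subset _ _)
        (fun s _ _ => Finset.sum_nonneg (fun b _ => hR s b))
    rw [part2]
    linarith
  · -- π is everywhere-optimal for RA + RBπ
    intro π' hv' s
    have h1 := Lle (rank s + 1) s (Nat.lt_succ_self _) π' hv'
    have h2 := Leq (rank s + 1) s (Nat.lt_succ_self _)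
    linarith
end

section
/- In a stochastic tree, let π be any policy and let R be a minimal implementation of π, i.e., a bonus function such that π is everywhere-optimal for R^A + R and such that ∑_{(s,a)} R(s,a) ≤ ∑_{(s,a)} R'(s,a) for every bonus function R' making π everywhere-optimal for R^A + R'. Then V_{s₀}(π, R^A + R) = V_{s₀}(π^A, R^A): under a minimal implementation, the agent's utility from the initial state with the bonus equals his optimal utility without any bonus. -/
open Finset

/-- in a stochastic tree, under a minimal implementation `R` of a policy `π`,
the agent's utility from the initial state with the bonus equals his optimal utility
without any bonus. -/
theorem stmt_7 {S A : Type} [Fintype S] [Fintype A] [DecidableEq S] [DecidableEq A]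
    (s₀ : S) (act : S → Finset A)
    (P : S → A → S → ℝ)
    (hP0 : ∀ s a t, 0 ≤ P s a t)
    (hP1 : ∀ s, ∀ a ∈ act s, ∑ t, P s a t = 1)
    (rank : S → ℕ)
    (hacyc : ∀ s, ∀ a ∈ act s, ∀ t, 0 < P s a t → rank t < rank s)
    (htree : ∀ t, t ≠ s₀ → ∃! s, ∃ a ∈ act s, 0 < P s a t)
    (hroot : ∀ s, ∀ a ∈ act s, P s a s₀ = 0)
    (V : (S → A) → (S → A → ℝ) → S → ℝ)
    (hVterm : ∀ (π : S → A) (R : S → A → ℝ) (s : S), act s = ∅ → V π R s = 0)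
    (hVrec : ∀ (π : S → A) (R : S → A → ℝ) (s : S), act s ≠ ∅ →
      V π R s = R s (π s) + ∑ t, P s (π s) t * V π R t)
    (RA : S → A → ℝ)
    (πA : S → A) (hπA : ∀ s, act s ≠ ∅ → πA s ∈ act s)
    (hπAopt : ∀ π : S → A, (∀ s, act s ≠ ∅ → π s ∈ act s) → ∀ s, V π RA s ≤ V πA RA s)
    (π : S → A) (hπ : ∀ s, act s ≠ ∅ → π s ∈ act s)
    (R : S → A → ℝ) (hR0 : ∀ s a, 0 ≤ R s a)
    (hRimpl : ∀ π' : S → A, (∀ s, act s ≠ ∅ → π' s ∈ act s) → ∀ s,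
      V π' (fun s b => RA s b + R s b) s ≤ V π (fun s b => RA s b + R s b) s)
    (hRmin : ∀ R' : S → A → ℝ, (∀ s a, 0 ≤ R' s a) →
      (∀ π' : S → A, (∀ s, act s ≠ ∅ → π' s ∈ act s) → ∀ s,
        V π' (fun s b => RA s b + R' s b) s ≤ V π (fun s b => RA s b + R' s b) s) →
      (∑ s, ∑ a, R s a) ≤ ∑ s, ∑ a, R' s a) :
    V π (fun s b => RA s b + R s b) s₀ = V πA RA s₀ := by
  classical
  -- Monotonicity of V in the reward, for valid policies
  have hmono : ∀ σ : S → A, (∀ s, act s ≠ ∅ → σ s ∈ act s) →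
      ∀ n s, rank s < n → V σ RA s ≤ V σ (fun s b => RA s b + R s b) s := by
    intro σ hσ n
    induction n with
    | zero => intro s hs; omega
    | succ n ih =>
      intro s _hs
      by_cases hne : act s = ∅
      · rw [hVterm _ _ _ hne, hVterm _ _ _ hne]
      · rw [hVrec _ _ _ hne, hVrec _ _ _ hne]
        have h1 : RA s (σ s) ≤ RA s (σ s) + R s (σ s) := by
          have := hR0 s (σ s); linarith
        have h2 : ∑ t, P s (σ s) t * V σ RA t
            ≤ ∑ t, P s (σ s) t * V σ (fun s b => RA s b + R s b) t := by
          apply Finset.sum_le_sum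
          intro t _
          rcases (hP0 s (σ s) t).lt_or_eq with hp | hp
          · refine mul_le_mul_of_nonneg_left (ih t ?_) (hP0 s (σ s) t)
            have := hacyc s (σ s) (hσ s hne) t hp
            omega
          · rw [← hp]; ring_nf; rfl
        exact add_le_add h1 h2
  -- V under RA depends only on the policy at states of rank ≤ m
  have hcongr : ∀ (m : ℕ) (σ₁ σ₂ : S → A), (∀ s, act s ≠ ∅ → σ₁ s ∈ act s) →
      (∀ u, rank u ≤ m → σ₁ u = σ₂ u) →
      ∀ n s, rank s < n → rank s ≤ m → V σ₁ RA s = V σ₂ RA s := by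
    intro m σ₁ σ₂ hσ₁ hag n
    induction n with
    | zero => intro s hs; omega
    | succ n ih =>
      intro s _hs hsm
      by_cases hne : act s = ∅
      · rw [hVterm _ _ _ hne, hVterm _ _ _ hne]
      · have heq : σ₁ s = σ₂ s := hag s hsm
        rw [hVrec _ _ _ hne, hVrec _ _ _ hne, ← heq]
        congr 1
        apply Finset.sum_congr rfl
        intro t _
        rcases (hP0 s (σ₁ s) t).lt_or_eq with hp | hp
        · have hrt := hacyc s (σ₁ s) (hσ₁ s hne) t hp
          rw [ih t (by omega) (by omega)]
        · rw [← hp]; ring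
  -- Bellman inequality for the optimal values M s = V πA RA s
  have hBell : ∀ s, ∀ a ∈ act s, RA s a + ∑ t, P s a t * V πA RA t ≤ V πA RA s := by
    intro s a ha
    have hne : act s ≠ ∅ := by
      intro h; rw [h] at ha; exact absurd ha (Finset.notMem_empty a)
    set σ : S → A := Function.update πA s a with hσdef
    have hσs : σ s = a := Function.update_self s a πA
    have hσval : ∀ u, act u ≠ ∅ → σ u ∈ act u := by
      intro u hu
      by_cases h : u = s
      · subst h; rw [hσs]; exact ha
      · rw [hσdef, Function.update_of_ne h]; exact hπA u hu
    have h1 : V σ RA s = RA s a + ∑ t, P s a t * V σ RA t := by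
      rw [hVrec σ RA s hne, hσs]
    have h2 : ∑ t, P s a t * V σ RA t = ∑ t, P s a t * V πA RA t := by
      apply Finset.sum_congr rfl
      intro t _
      rcases (hP0 s a t).lt_or_eq with hp | hp
      · have hrt := hacyc s a ha t hp
        have : V σ RA t = V πA RA t := by
          apply hcongr (rank t) σ πA hσval ?_ (rank t + 1) t (by omega) le_rfl
          intro u hu
          have hus : u ≠ s := by
            intro h; subst h; omega
          rw [hσdef, Function.update_of_ne hus]
        rw [this]
      · rw [← hp]; ring
    have h3 := hπAopt σ hσval s
    rw [h1, h2] at h3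
    exact h3
  -- the canonical minimal bonus
  set Rstar : S → A → ℝ := fun s a =>
    if act s ≠ ∅ ∧ a = π s then
      V πA RA s - (RA s (π s) + ∑ t, P s (π s) t * V πA RA t)
    else 0 with hRstardef
  have hRstar0 : ∀ s a, 0 ≤ Rstar s a := by
    intro s a
    rw [hRstardef]
    dsimp only
    split_ifs with h
    · have := hBell s (π s) (hπ s h.1); linarith
    · exact le_refl 0
  have hRstarπ : ∀ s, act s ≠ ∅ →
      Rstar s (π s) = V πA RA s - (RA s (π s) + ∑ t, P s (π s) t * V πA RA t) := by
    intro s hne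
    rw [hRstardef]
    simp [hne]
  have hRstaroff : ∀ s a, ¬(act s ≠ ∅ ∧ a = π s) → Rstar s a = 0 := by
    intro s a h
    rw [hRstardef]
    simp only [h, if_false]
  -- value of π under RA + Rstar equals M everywhere
  have hVstar : ∀ n s, rank s < n → V π (fun s b => RA s b + Rstar s b) s = V πA RA s := by
    intro n
    induction n with
    | zero => intro s hs; omega
    | succ n ih =>
      intro s _hs
      by_cases hne : act s = ∅
      · rw [hVterm _ _ _ hne, hVterm _ _ _ hne]
      · rw [hVrec _ _ _ hne]
        have hsum : ∑ t, P s (π s) t * V π (fun s b => RA s b + Rstar s b) t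
            = ∑ t, P s (π s) t * V πA RA t := by
          apply Finset.sum_congr rfl
          intro t _
          rcases (hP0 s (π s) t).lt_or_eq with hp | hp
          · have hrt := hacyc s (π s) (hπ s hne) t hp
            rw [ih t (by omega)]
          · rw [← hp]; ring
        rw [hsum]
        have := hRstarπ s hne
        linarith
  -- π is everywhere-optimal for RA + Rstar
  have hVstarle : ∀ π' : S → A, (∀ s, act s ≠ ∅ → π' s ∈ act s) →
      ∀ n s, rank s < n → V π' (fun s b => RA s b + Rstar s b) s ≤ V πA RA s := by
    intro π' hπ' n
    induction n with
    | zero => intro s hs; omega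
    | succ n ih =>
      intro s _hs
      by_cases hne : act s = ∅
      · rw [hVterm _ _ _ hne, hVterm _ _ _ hne]
      · rw [hVrec _ _ _ hne]
        have hsum : ∑ t, P s (π' s) t * V π' (fun s b => RA s b + Rstar s b) t
            ≤ ∑ t, P s (π' s) t * V πA RA t := by
          apply Finset.sum_le_sum
          intro t _
          rcases (hP0 s (π' s) t).lt_or_eq with hp | hp
          · have hrt := hacyc s (π' s) (hπ' s hne) t hp
            exact mul_le_mul_of_nonneg_left (ih t (by omega)) (hP0 s (π' s) t)
          · rw [← hp]; ring_nf; rfl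
        by_cases hps : π' s = π s
        · have := hRstarπ s hne
          rw [hps]
          have hs2 : ∑ t, P s (π s) t * V π' (fun s b => RA s b + Rstar s b) t
              ≤ ∑ t, P s (π s) t * V πA RA t := by rw [← hps]; exact hsum
          linarith
        · have h0 : Rstar s (π' s) = 0 := hRstaroff s (π' s) (by
            intro h; exact hps h.2)
          have hb := hBell s (π' s) (hπ' s hne)
          linarith
  have hstarOpt : ∀ π' : S → A, (∀ s, act s ≠ ∅ → π' s ∈ act s) → ∀ s,
      V π' (fun s b => RA s b + Rstar s b) s ≤ V π (fun s b => RA s b + Rstar s b) s := by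
    intro π' hπ' s
    have h1 := hVstarle π' hπ' (rank s + 1) s (by omega)
    have h2 := hVstar (rank s + 1) s (by omega)
    linarith
  have hcost : (∑ s, ∑ a, R s a) ≤ ∑ s, ∑ a, Rstar s a := hRmin Rstar hRstar0 hstarOpt
  -- excess e s = V π (RA+R) s - M s is nonnegative, zero at terminals
  have he0 : ∀ s, V πA RA s ≤ V π (fun s b => RA s b + R s b) s := by
    intro s
    have h1 := hmono πA hπA (rank s + 1) s (by omega)
    have h2 := hRimpl πA hπA s
    linarith
  have heterm : ∀ s, act s = ∅ → V π (fun s b => RA s b + R s b) s = V πA RA s := by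
    intro s hs
    rw [hVterm _ _ _ hs, hVterm _ _ _ hs]
  -- key identity at nonterminal states
  have hid : ∀ s, act s ≠ ∅ →
      Rstar s (π s) = R s (π s)
        - ((V π (fun s b => RA s b + R s b) s - V πA RA s)
          - ∑ t, P s (π s) t * (V π (fun s b => RA s b + R s b) t - V πA RA t)) := by
    intro s hne
    have h1 := hVrec π (fun s b => RA s b + R s b) s hne
    have h2 := hRstarπ s hne
    have h3 : ∑ t, P s (π s) t * (V π (fun s b => RA s b + R s b) t - V πA RA t)
        = (∑ t, P s (π s) t * V π (fun s b => RA s b + R s b) t)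
          - ∑ t, P s (π s) t * V πA RA t := by
      rw [← Finset.sum_sub_distrib]
      apply Finset.sum_congr rfl
      intro t _
      ring
    rw [h2, h3]
    linarith
  -- abbreviation for the excess
  set e : S → ℝ := fun s => V π (fun s b => RA s b + R s b) s - V πA RA s with hedef
  have hepos : ∀ s, 0 ≤ e s := fun s => by rw [hedef]; dsimp only; have := he0 s; linarith
  have hezero : ∀ s, act s = ∅ → e s = 0 := fun s hs => by
    rw [hedef]; dsimp only; rw [heterm s hs]; ring
  -- sum of Rstar over all pairs
  have hsumRstar : ∑ s, ∑ a, Rstar s a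
      = ∑ s, (if act s ≠ ∅ then Rstar s (π s) else 0) := by
    apply Finset.sum_congr rfl
    intro s _
    by_cases hne : act s = ∅
    · simp only [hne, ne_eq, not_true_eq_false, if_false]
      apply Finset.sum_eq_zero
      intro a _
      exact hRstaroff s a (by intro h; exact h.1 hne)
    · simp only [hne, ne_eq, not_false_eq_true, if_true]
      rw [Finset.sum_eq_single (π s)]
      · intro b _ hb
        exact hRstaroff s b (by intro h; exact hb h.2)
      · intro h; exact absurd (Finset.mem_univ (π s)) h
  -- sum of R dominates the on-path sum
  have hsumR : ∑ s, (if act s ≠ ∅ then R s (π s) else 0) ≤ ∑ s, ∑ a, R s a := by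
    apply Finset.sum_le_sum
    intro s _
    by_cases hne : act s = ∅
    · simp only [hne, ne_eq, not_true_eq_false, if_false]
      exact Finset.sum_nonneg fun a _ => hR0 s a
    · simp only [hne, ne_eq, not_false_eq_true, if_true]
      exact Finset.single_le_sum (fun a _ => hR0 s a) (Finset.mem_univ (π s))
  -- rewrite on-path Rstar sum using the identity
  have hsplit : ∑ s, (if act s ≠ ∅ then Rstar s (π s) else 0)
      = (∑ s, (if act s ≠ ∅ then R s (π s) else 0))
        - ∑ s, (if act s ≠ ∅ then (e s - ∑ t, P s (π s) t * e t) else 0) := by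
    rw [← Finset.sum_sub_distrib]
    apply Finset.sum_congr rfl
    intro s _
    by_cases hne : act s = ∅
    · simp [hne]
    · simp only [hne, ne_eq, not_false_eq_true, if_true]
      have := hid s hne
      rw [hedef]
      dsimp only
      linarith
  -- hence the total excess-flow is nonpositive
  have hflow : ∑ s, (if act s ≠ ∅ then (e s - ∑ t, P s (π s) t * e t) else 0) ≤ 0 := by
    have h1 : ∑ s, (if act s ≠ ∅ then R s (π s) else 0) ≤ ∑ s, ∑ a, Rstar s a :=
      le_trans hsumR hcost
    rw [hsumRstar, hsplit] at h1
    linarith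
  -- split the flow sum
  have hflowsplit : ∑ s, (if act s ≠ ∅ then (e s - ∑ t, P s (π s) t * e t) else 0)
      = (∑ s, (if act s ≠ ∅ then e s else 0))
        - ∑ s, (if act s ≠ ∅ then (∑ t, P s (π s) t * e t) else 0) := by
    rw [← Finset.sum_sub_distrib]
    apply Finset.sum_congr rfl
    intro s _
    by_cases hne : act s = ∅ <;> simp [hne]
  have hesum : ∑ s, (if act s ≠ ∅ then e s else 0) = ∑ s, e s := by
    apply Finset.sum_congr rfl
    intro s _
    by_cases hne : act s = ∅
    · simp [hne, hezero s hne]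
    · simp [hne]
  -- bound the incoming flow using the tree structure
  have hin : ∑ s, (if act s ≠ ∅ then (∑ t, P s (π s) t * e t) else 0)
      ≤ ∑ t, (if t = s₀ then 0 else e t) := by
    have hswap : ∑ s, (if act s ≠ ∅ then (∑ t, P s (π s) t * e t) else 0)
        = ∑ t, (∑ s, (if act s ≠ ∅ then P s (π s) t else 0)) * e t := by
      have h1 : ∀ s : S, (if act s ≠ ∅ then (∑ t, P s (π s) t * e t) else 0)
          = ∑ t, (if act s ≠ ∅ then P s (π s) t else 0) * e t := by
        intro s
        by_cases hne : act s = ∅ <;> simp [hne]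
      rw [Finset.sum_congr rfl fun s _ => h1 s, Finset.sum_comm]
      apply Finset.sum_congr rfl
      intro t _
      rw [Finset.sum_mul]
    rw [hswap]
    apply Finset.sum_le_sum
    intro t _
    by_cases ht : t = s₀
    · rw [ht, if_pos rfl]
      have hc : ∑ s, (if act s ≠ ∅ then P s (π s) s₀ else 0) = 0 := by
        apply Finset.sum_eq_zero
        intro s _
        by_cases hne : act s = ∅
        · simp [hne]
        · simp only [hne, ne_eq, not_false_eq_true, if_true]
          exact hroot s (π s) (hπ s hne)
      rw [hc, zero_mul]
    · simp only [ht, if_false]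
      obtain ⟨u, _hu, huniq⟩ := htree t ht
      have hc : ∑ s, (if act s ≠ ∅ then P s (π s) t else 0) ≤ 1 := by
        rw [Finset.sum_eq_single u]
        · by_cases hneu : act u = ∅
          · simp [hneu]
          · simp only [hneu, ne_eq, not_false_eq_true, if_true]
            calc P u (π u) t ≤ ∑ t', P u (π u) t' :=
                  Finset.single_le_sum (fun t' _ => hP0 u (π u) t') (Finset.mem_univ t)
              _ = 1 := hP1 u (π u) (hπ u hneu)
        · intro b _ hb
          by_cases hneb : act b = ∅
          · simp [hneb]
          · simp only [hneb, ne_eq, not_false_eq_true, if_true]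
            by_contra hP
            have hPpos : 0 < P b (π b) t := lt_of_le_of_ne (hP0 b (π b) t) (Ne.symm hP)
            exact hb (huniq b ⟨π b, hπ b hneb, hPpos⟩)
        · intro h; exact absurd (Finset.mem_univ u) h
      calc (∑ s, (if act s ≠ ∅ then P s (π s) t else 0)) * e t
          ≤ 1 * e t := mul_le_mul_of_nonneg_right hc (hepos t)
        _ = e t := one_mul _
  have hiso : ∑ t, (if t = s₀ then 0 else e t) = (∑ t, e t) - e s₀ := by
    have h1 : ∀ t : S, (if t = s₀ then 0 else e t) = e t - (if t = s₀ then e t else 0) := by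
      intro t
      by_cases ht : t = s₀ <;> simp [ht]
    rw [Finset.sum_congr rfl fun t _ => h1 t, Finset.sum_sub_distrib]
    congr 1
    simp
  -- conclude
  have hfinal : e s₀ ≤ 0 := by
    have h1 := hflow
    rw [hflowsplit, hesum] at h1
    have h2 := hin
    rw [hiso] at h2
    linarith
  have h3 := hepos s₀
  have : e s₀ = 0 := le_antisymm hfinal h3
  rw [hedef] at this
  dsimp only at this
  linarith
end

section
/- In a finite acyclic MDP, let R^B be a bonus function and let π* be a policy that is everywhere-optimal for R^A + R^B, and let δ > 0. Define R̃^B by R̃^B(s,a) = R^B(s,a) + 2^{h(s)}·δ if s is non-terminal and a = π*(s), and R̃^B(s,a) = R^B(s,a) otherwise, where h(s) is the height of s. Then π* is everywhere-optimal for R^A + R̃^B; moreover, for every policy π and every non-terminal state s with π(s) ≠ π*(s), V_s(π, R^A + R̃^B) < V_s(π*, R^A + R̃^B), so π* is the unique everywhere-optimal policy for R^A + R̃^B; and the added total cost is ∑_{(s,a)} (R̃^B − R^B)(s,a) = δ·∑_{non-terminal s} 2^{h(s)}, which is at most any prescribed ε > 0 for δ small enough. -/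
open Finset

/-- in a finite acyclic MDP, perturbing a bonus by `2^{h(s)}·δ` along an
everywhere-optimal policy `π*` keeps `π*` everywhere-optimal, makes it strictly better
than any deviating policy (hence the unique everywhere-optimal policy), and the added
total cost is `δ·∑ 2^{h(s)}`, which can be made at most any `ε > 0`. -/
theorem stmt_8 {S A : Type} [Fintype S] [Fintype A] [DecidableEq S] [DecidableEq A]
    (act : S → Finset A)
    (P : S → A → S → ℝ)
    (hP0 : ∀ s a t, 0 ≤ P s a t)
    (hP1 : ∀ s, ∀ a ∈ act s, ∑ t, P s a t = 1)
    (rank : S → ℕ)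
    (hacyc : ∀ s, ∀ a ∈ act s, ∀ t, 0 < P s a t → rank t < rank s)
    (V : (S → A) → (S → A → ℝ) → S → ℝ)
    (hVterm : ∀ (π : S → A) (R : S → A → ℝ) (s : S), act s = ∅ → V π R s = 0)
    (hVrec : ∀ (π : S → A) (R : S → A → ℝ) (s : S), act s ≠ ∅ →
      V π R s = R s (π s) + ∑ t, P s (π s) t * V π R t)
    (RA : S → A → ℝ)
    (RB : S → A → ℝ) (hRB0 : ∀ s a, 0 ≤ RB s a)
    (πstar : S → A) (hπstar : ∀ s, act s ≠ ∅ → πstar s ∈ act s)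
    (hopt : ∀ π : S → A, (∀ s, act s ≠ ∅ → π s ∈ act s) → ∀ s,
      V π (fun s b => RA s b + RB s b) s ≤ V πstar (fun s b => RA s b + RB s b) s)
    (δ : ℝ) (hδ : 0 < δ)
    (h : S → ℕ)
    (hh0 : ∀ s, act s = ∅ → h s = 0)
    (hhlt : ∀ s, ∀ a ∈ act s, ∀ t, 0 < P s a t → h t < h s)
    (hhmax : ∀ s, act s ≠ ∅ → ∃ a ∈ act s, ∃ t, 0 < P s a t ∧ h s = h t + 1)
    (RtB : S → A → ℝ)
    (hRtB : ∀ s b, RtB s b = RB s b +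
      (if act s ≠ ∅ ∧ b = πstar s then (2 : ℝ) ^ (h s) * δ else 0)) :
    (∀ π : S → A, (∀ s, act s ≠ ∅ → π s ∈ act s) → ∀ s,
      V π (fun s b => RA s b + RtB s b) s ≤ V πstar (fun s b => RA s b + RtB s b) s) ∧
    (∀ π : S → A, (∀ s, act s ≠ ∅ → π s ∈ act s) → ∀ s, act s ≠ ∅ → π s ≠ πstar s →
      V π (fun s b => RA s b + RtB s b) s < V πstar (fun s b => RA s b + RtB s b) s) ∧
    (∀ π : S → A, (∀ s, act s ≠ ∅ → π s ∈ act s) →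
      (∀ σ : S → A, (∀ s, act s ≠ ∅ → σ s ∈ act s) → ∀ s,
        V σ (fun s b => RA s b + RtB s b) s ≤ V π (fun s b => RA s b + RtB s b) s) →
      ∀ s, act s ≠ ∅ → π s = πstar s) ∧
    ((∑ s, ∑ b, (RtB s b - RB s b)) =
      δ * ∑ s ∈ Finset.univ.filter (fun s => act s ≠ ∅), (2 : ℝ) ^ (h s)) ∧
    (∀ ε : ℝ, 0 < ε → ∃ δ' : ℝ, 0 < δ' ∧
      δ' * ∑ s ∈ Finset.univ.filter (fun s => act s ≠ ∅), (2 : ℝ) ^ (h s) ≤ ε) := by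

  classical
  set R : S → A → ℝ := fun s b => RA s b + RB s b with hRdef
  set Rt : S → A → ℝ := fun s b => RA s b + RtB s b with hRtdef
  -- difference recursion
  have hDrec : ∀ (π : S → A) (s : S), act s ≠ ∅ →
      V π Rt s - V π R s = (if π s = πstar s then (2:ℝ)^(h s) * δ else 0)
        + ∑ t, P s (π s) t * (V π Rt t - V π R t) := by
    intro π s hs
    have hsplit : ∑ t, P s (π s) t * (V π Rt t - V π R t)
        = (∑ t, P s (π s) t * V π Rt t) - ∑ t, P s (π s) t * V π R t := by
      rw [← Finset.sum_sub_distrib]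
      exact Finset.sum_congr rfl (fun t _ => by ring)
    rw [hVrec π Rt s hs, hVrec π R s hs, hsplit]
    have hRtval : Rt s (π s) = R s (π s)
        + (if π s = πstar s then (2:ℝ)^(h s) * δ else 0) := by
      simp only [hRtdef, hRdef, hRtB, hs, ne_eq, not_false_iff, true_and]
      ring
    rw [hRtval]; ring
  -- nonnegativity of difference
  have hD0 : ∀ (π : S → A), (∀ s, act s ≠ ∅ → π s ∈ act s) → ∀ n (s : S), h s < n →
      0 ≤ V π Rt s - V π R s := by
    intro π hπ n
    induction n with
    | zero => intro s hs; omega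
    | succ n ih =>
      intro s hs
      by_cases hterm : act s = ∅
      · rw [hVterm π Rt s hterm, hVterm π R s hterm]; simp
      · rw [hDrec π s hterm]
        have hsum : 0 ≤ ∑ t, P s (π s) t * (V π Rt t - V π R t) := by
          apply Finset.sum_nonneg
          intro t _
          rcases (hP0 s (π s) t).lt_or_eq with hpos | heq
          · exact mul_nonneg hpos.le
              (ih t (by have := hhlt s (π s) (hπ s hterm) t hpos; omega))
          · rw [← heq]; simp
        have hite : 0 ≤ (if π s = πstar s then (2:ℝ)^(h s) * δ else 0) := by
          split <;> positivity
        linarith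
  -- upper bound on difference
  have hDub : ∀ (π : S → A), (∀ s, act s ≠ ∅ → π s ∈ act s) → ∀ n (s : S), h s < n →
      V π Rt s - V π R s ≤ ((2:ℝ)^(h s + 1) - 1) * δ := by
    intro π hπ n
    induction n with
    | zero => intro s hs; omega
    | succ n ih =>
      intro s hs
      have hpows : (0:ℝ) < (2:ℝ)^(h s) := by positivity
      by_cases hterm : act s = ∅
      · rw [hVterm π Rt s hterm, hVterm π R s hterm]
        have h2 : (1:ℝ) ≤ (2:ℝ)^(h s + 1) := one_le_pow₀ (by norm_num)
        nlinarith
      · rw [hDrec π s hterm]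
        have hsumle : ∑ t, P s (π s) t * (V π Rt t - V π R t)
            ≤ ((2:ℝ)^(h s) - 1) * δ := by
          have hstep : ∑ t, P s (π s) t * (V π Rt t - V π R t)
              ≤ ∑ t, P s (π s) t * (((2:ℝ)^(h s) - 1) * δ) := by
            apply Finset.sum_le_sum
            intro t _
            rcases (hP0 s (π s) t).lt_or_eq with hpos | heq
            · have hlt := hhlt s (π s) (hπ s hterm) t hpos
              have hb := ih t (by omega)
              have hmono : ((2:ℝ)^(h t + 1) - 1) * δ ≤ ((2:ℝ)^(h s) - 1) * δ := by
                have : (2:ℝ)^(h t + 1) ≤ (2:ℝ)^(h s) :=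
                  pow_le_pow_right₀ (by norm_num) (by omega)
                nlinarith
              nlinarith [hb.trans hmono, hpos.le]
            · rw [← heq]; simp
          calc ∑ t, P s (π s) t * (V π Rt t - V π R t)
              ≤ ∑ t, P s (π s) t * (((2:ℝ)^(h s) - 1) * δ) := hstep
            _ = (∑ t, P s (π s) t) * (((2:ℝ)^(h s) - 1) * δ) := by
                rw [Finset.sum_mul]
            _ = ((2:ℝ)^(h s) - 1) * δ := by rw [hP1 s (π s) (hπ s hterm)]; ring
        have hite : (if π s = πstar s then (2:ℝ)^(h s) * δ else 0)
            ≤ (2:ℝ)^(h s) * δ := by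
          split
          · exact le_rfl
          · positivity
        have hpow : ((2:ℝ)^(h s + 1) - 1) * δ
            = (2:ℝ)^(h s) * δ + ((2:ℝ)^(h s) - 1) * δ := by ring
        linarith
  -- lower bound for πstar at nonterminal states
  have hDstar : ∀ s : S, act s ≠ ∅ →
      (2:ℝ)^(h s) * δ ≤ V πstar Rt s - V πstar R s := by
    intro s hs
    rw [hDrec πstar s hs]
    have hsum : 0 ≤ ∑ t, P s (πstar s) t * (V πstar Rt t - V πstar R t) := by
      apply Finset.sum_nonneg
      intro t _
      rcases (hP0 s (πstar s) t).lt_or_eq with hpos | heq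
      · exact mul_nonneg hpos.le (hD0 πstar hπstar (h t + 1) t (by omega))
      · rw [← heq]; simp
    rw [if_pos rfl]
    linarith
  -- strictly smaller difference for deviating policies
  have hDdev : ∀ (π : S → A), (∀ s, act s ≠ ∅ → π s ∈ act s) → ∀ s : S,
      act s ≠ ∅ → π s ≠ πstar s →
      V π Rt s - V π R s ≤ ((2:ℝ)^(h s) - 1) * δ := by
    intro π hπ s hs hne
    rw [hDrec π s hs]
    have hsumle : ∑ t, P s (π s) t * (V π Rt t - V π R t)
        ≤ ((2:ℝ)^(h s) - 1) * δ := by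
      have hstep : ∑ t, P s (π s) t * (V π Rt t - V π R t)
          ≤ ∑ t, P s (π s) t * (((2:ℝ)^(h s) - 1) * δ) := by
        apply Finset.sum_le_sum
        intro t _
        rcases (hP0 s (π s) t).lt_or_eq with hpos | heq
        · have hlt := hhlt s (π s) (hπ s hs) t hpos
          have hb := hDub π hπ (h t + 1) t (by omega)
          have hmono : ((2:ℝ)^(h t + 1) - 1) * δ ≤ ((2:ℝ)^(h s) - 1) * δ := by
            have : (2:ℝ)^(h t + 1) ≤ (2:ℝ)^(h s) :=
              pow_le_pow_right₀ (by norm_num) (by omega)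
            nlinarith
          nlinarith [hb.trans hmono, hpos.le]
        · rw [← heq]; simp
      calc ∑ t, P s (π s) t * (V π Rt t - V π R t)
          ≤ ∑ t, P s (π s) t * (((2:ℝ)^(h s) - 1) * δ) := hstep
        _ = (∑ t, P s (π s) t) * (((2:ℝ)^(h s) - 1) * δ) := by rw [Finset.sum_mul]
        _ = ((2:ℝ)^(h s) - 1) * δ := by rw [hP1 s (π s) (hπ s hs)]; ring
    rw [if_neg hne]
    linarith
  -- monotonicity: difference for any valid π is at most that of πstar
  have hDmon : ∀ (π : S → A), (∀ s, act s ≠ ∅ → π s ∈ act s) → ∀ n (s : S), h s < n →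
      V π Rt s - V π R s ≤ V πstar Rt s - V πstar R s := by
    intro π hπ n
    induction n with
    | zero => intro s hs; omega
    | succ n ih =>
      intro s hs
      by_cases hterm : act s = ∅
      · rw [hVterm π Rt s hterm, hVterm π R s hterm,
          hVterm πstar Rt s hterm, hVterm πstar R s hterm]
      · by_cases hc : π s = πstar s
        · rw [hDrec π s hterm, hDrec πstar s hterm, hc]
          have : ∑ t, P s (πstar s) t * (V π Rt t - V π R t)
              ≤ ∑ t, P s (πstar s) t * (V πstar Rt t - V πstar R t) := by
            apply Finset.sum_le_sum
            intro t _
            rcases (hP0 s (πstar s) t).lt_or_eq with hpos | heq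
            · exact mul_le_mul_of_nonneg_left
                (ih t (by have := hhlt s (πstar s) (hπstar s hterm) t hpos; omega))
                hpos.le
            · rw [← heq]; simp
          linarith
        · have h1 := hDdev π hπ s hterm hc
          have h2 := hDstar s hterm
          have hpows : (0:ℝ) < (2:ℝ)^(h s) := by positivity
          nlinarith
  -- strict comparison of differences for deviating policies
  have hDstrict : ∀ (π : S → A), (∀ s, act s ≠ ∅ → π s ∈ act s) → ∀ s : S,
      act s ≠ ∅ → π s ≠ πstar s →
      V π Rt s - V π R s < V πstar Rt s - V πstar R s := by
    intro π hπ s hs hne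
    have h1 := hDdev π hπ s hs hne
    have h2 := hDstar s hs
    have hpows : (0:ℝ) < (2:ℝ)^(h s) := by positivity
    nlinarith
  -- part 1
  have part1 : ∀ π : S → A, (∀ s, act s ≠ ∅ → π s ∈ act s) → ∀ s,
      V π Rt s ≤ V πstar Rt s := by
    intro π hπ s
    have h1 := hopt π hπ s
    have h2 := hDmon π hπ (h s + 1) s (by omega)
    linarith
  -- part 2
  have part2 : ∀ π : S → A, (∀ s, act s ≠ ∅ → π s ∈ act s) → ∀ s, act s ≠ ∅ →
      π s ≠ πstar s → V π Rt s < V πstar Rt s := by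
    intro π hπ s hs hne
    have h1 := hopt π hπ s
    have h2 := hDstrict π hπ s hs hne
    linarith
  refine ⟨part1, part2, ?_, ?_, ?_⟩
  · -- uniqueness
    intro π hπ hoptπ s hs
    by_contra hne
    have h1 := part2 π hπ s hs hne
    have h2 := hoptπ πstar hπstar s
    linarith
  · -- total cost
    have hrow : ∀ s : S, ∑ b, (RtB s b - RB s b)
        = if act s ≠ ∅ then (2:ℝ)^(h s) * δ else 0 := by
      intro s
      by_cases hs : act s = ∅
      · simp [hRtB, hs]
      · simp only [hRtB, hs, ne_eq, not_false_iff, true_and, if_true,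
          add_sub_cancel_left]
        simp
    calc ∑ s, ∑ b, (RtB s b - RB s b)
        = ∑ s, (if act s ≠ ∅ then (2:ℝ)^(h s) * δ else 0) :=
          Finset.sum_congr rfl (fun s _ => hrow s)
      _ = ∑ s ∈ Finset.univ.filter (fun s => act s ≠ ∅), (2:ℝ)^(h s) * δ := by
          rw [Finset.sum_filter]
      _ = δ * ∑ s ∈ Finset.univ.filter (fun s => act s ≠ ∅), (2:ℝ)^(h s) := by
          rw [Finset.mul_sum]
          exact Finset.sum_congr rfl (fun s _ => by ring)
  · -- small total cost
    intro ε hε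
    set T := ∑ s ∈ Finset.univ.filter (fun s => act s ≠ ∅), (2:ℝ)^(h s) with hT
    have hT0 : 0 ≤ T := Finset.sum_nonneg (fun s _ => by positivity)
    refine ⟨ε / (T + 1), by positivity, ?_⟩
    rw [div_mul_eq_mul_div, div_le_iff₀ (by linarith)]
    nlinarith
end

section
/- In a finite acyclic MDP, if a policy π is B-implementable for some budget B ≥ 0, then the infimum of the total cost ∑_{(s,a)} R(s,a) over all bonus functions R such that V_{s₀}(π, R^A + R) ≥ V_{s₀}(π', R^A + R) for every policy π' is attained; that is, π admits a minimal implementation. -/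
open Finset

/-- in a finite acyclic MDP, if a policy `π` is `B`-implementable then the
infimum of the total cost over bonus functions implementing `π` (from the initial state)
is attained: `π` admits a minimal implementation. -/
theorem stmt_9 {S A : Type} [Fintype S] [Fintype A]
    (s₀ : S) (act : S → Finset A)
    (P : S → A → S → ℝ)
    (hP0 : ∀ s a t, 0 ≤ P s a t)
    (hP1 : ∀ s, ∀ a ∈ act s, ∑ t, P s a t = 1)
    (rank : S → ℕ)
    (hacyc : ∀ s, ∀ a ∈ act s, ∀ t, 0 < P s a t → rank t < rank s)
    (V : (S → A) → (S → A → ℝ) → S → ℝ)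
    (hVterm : ∀ (π : S → A) (R : S → A → ℝ) (s : S), act s = ∅ → V π R s = 0)
    (hVrec : ∀ (π : S → A) (R : S → A → ℝ) (s : S), act s ≠ ∅ →
      V π R s = R s (π s) + ∑ t, P s (π s) t * V π R t)
    (RA : S → A → ℝ)
    (π : S → A) (hπ : ∀ s, act s ≠ ∅ → π s ∈ act s)
    (B : ℝ) (hB : 0 ≤ B)
    (himpl : ∃ RB : S → A → ℝ, (∀ s a, 0 ≤ RB s a) ∧ (∑ s, ∑ a, RB s a) ≤ B ∧
      ∀ π' : S → A, (∀ s, act s ≠ ∅ → π' s ∈ act s) →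
        V π' (fun s b => RA s b + RB s b) s₀ ≤ V π (fun s b => RA s b + RB s b) s₀) :
    ∃ R : S → A → ℝ, (∀ s a, 0 ≤ R s a) ∧
      (∀ π' : S → A, (∀ s, act s ≠ ∅ → π' s ∈ act s) →
        V π' (fun s b => RA s b + R s b) s₀ ≤ V π (fun s b => RA s b + R s b) s₀) ∧
      ∀ R' : S → A → ℝ, (∀ s a, 0 ≤ R' s a) →
        (∀ π' : S → A, (∀ s, act s ≠ ∅ → π' s ∈ act s) →
          V π' (fun s b => RA s b + R' s b) s₀ ≤ V π (fun s b => RA s b + R' s b) s₀) →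
        (∑ s, ∑ a, R s a) ≤ ∑ s, ∑ a, R' s a := by
  classical
  obtain ⟨RB, hRB0, hRBB, hRBimpl⟩ := himpl
  -- continuity of R ↦ V π'' (RA + R) s for valid policies π''
  have cont : ∀ (π'' : S → A), (∀ s, act s ≠ ∅ → π'' s ∈ act s) → ∀ s : S,
      Continuous (fun R : S → A → ℝ => V π'' (fun s b => RA s b + R s b) s) := by
    intro π'' hπ''
    have key : ∀ n : ℕ, ∀ s : S, rank s < n →
        Continuous (fun R : S → A → ℝ => V π'' (fun s b => RA s b + R s b) s) := by
      intro n
      induction n with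
      | zero => intro s hs; omega
      | succ n ih =>
        intro s hs
        by_cases hterm : act s = ∅
        · have heq : (fun R : S → A → ℝ => V π'' (fun s b => RA s b + R s b) s)
              = fun _ => 0 := funext fun R => hVterm _ _ _ hterm
          rw [heq]; exact continuous_const
        · have heq : (fun R : S → A → ℝ => V π'' (fun s b => RA s b + R s b) s)
              = fun R : S → A → ℝ => (RA s (π'' s) + R s (π'' s))
                  + ∑ t, P s (π'' s) t * V π'' (fun s b => RA s b + R s b) t :=
            funext fun R => hVrec _ _ _ hterm
          rw [heq]
          apply Continuous.add
          · exact continuous_const.add ((continuous_apply (π'' s)).comp (continuous_apply s))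
          · apply continuous_finset_sum
            intro t _
            by_cases hPt : 0 < P s (π'' s) t
            · have hrt : rank t < rank s := hacyc s (π'' s) (hπ'' s hterm) t hPt
              exact continuous_const.mul (ih t (by omega))
            · have hz : P s (π'' s) t = 0 := le_antisymm (not_lt.1 hPt) (hP0 _ _ _)
              simp only [hz, zero_mul]
              exact continuous_const
    intro s; exact key (rank s + 1) s (Nat.lt_succ_self _)
  -- the cost function is continuous
  have contcost : Continuous (fun R : S → A → ℝ => ∑ s, ∑ a, R s a) := by
    apply continuous_finset_sum; intro s _
    apply continuous_finset_sum; intro a _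
    exact (continuous_apply a).comp (continuous_apply s)
  -- the compact feasible set with cost at most B
  set K : Set (S → A → ℝ) := {R | (∀ s a, 0 ≤ R s a) ∧ (∑ s, ∑ a, R s a) ≤ B ∧
    ∀ π' : S → A, (∀ s, act s ≠ ∅ → π' s ∈ act s) →
      V π' (fun s b => RA s b + R s b) s₀ ≤ V π (fun s b => RA s b + R s b) s₀} with hK
  have hKsub : K ⊆ Set.Icc (fun _ _ => (0:ℝ)) (fun _ _ => B) := by
    rintro R ⟨h0, hB', _⟩
    constructor
    · intro s a; exact h0 s a
    · intro s a
      calc R s a ≤ ∑ a, R s a := Finset.single_le_sum (fun a _ => h0 s a) (mem_univ a)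
        _ ≤ ∑ s, ∑ a, R s a :=
          Finset.single_le_sum (fun s _ => Finset.sum_nonneg fun a _ => h0 s a) (mem_univ s)
        _ ≤ B := hB'
  have hKclosed : IsClosed K := by
    have h1 : IsClosed {R : S → A → ℝ | ∀ s a, 0 ≤ R s a} := by
      have he : {R : S → A → ℝ | ∀ s a, 0 ≤ R s a} = ⋂ s, ⋂ a, {R | 0 ≤ R s a} := by
        ext R; simp [Set.mem_iInter]
      rw [he]
      exact isClosed_iInter fun s => isClosed_iInter fun a =>
        isClosed_le continuous_const ((continuous_apply a).comp (continuous_apply s))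
    have h2 : IsClosed {R : S → A → ℝ | (∑ s, ∑ a, R s a) ≤ B} :=
      isClosed_le contcost continuous_const
    have h3 : IsClosed {R : S → A → ℝ | ∀ π' : S → A, (∀ s, act s ≠ ∅ → π' s ∈ act s) →
        V π' (fun s b => RA s b + R s b) s₀ ≤ V π (fun s b => RA s b + R s b) s₀} := by
      have he : {R : S → A → ℝ | ∀ π' : S → A, (∀ s, act s ≠ ∅ → π' s ∈ act s) →
          V π' (fun s b => RA s b + R s b) s₀ ≤ V π (fun s b => RA s b + R s b) s₀}
          = ⋂ π' : S → A, ⋂ (_ : ∀ s, act s ≠ ∅ → π' s ∈ act s),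
            {R | V π' (fun s b => RA s b + R s b) s₀ ≤ V π (fun s b => RA s b + R s b) s₀} := by
        ext R; simp [Set.mem_iInter]
      rw [he]
      exact isClosed_iInter fun π' => isClosed_iInter fun hπ' =>
        isClosed_le (cont π' hπ' s₀) (cont π hπ s₀)
    have he : K = {R : S → A → ℝ | ∀ s a, 0 ≤ R s a}
        ∩ ({R : S → A → ℝ | (∑ s, ∑ a, R s a) ≤ B}
          ∩ {R : S → A → ℝ | ∀ π' : S → A, (∀ s, act s ≠ ∅ → π' s ∈ act s) →
            V π' (fun s b => RA s b + R s b) s₀ ≤ V π (fun s b => RA s b + R s b) s₀}) := by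
      ext R; simp [hK, Set.mem_setOf_eq, and_assoc]
    rw [he]
    exact h1.inter (h2.inter h3)
  have hKcompact : IsCompact K :=
    IsCompact.of_isClosed_subset isCompact_Icc hKclosed hKsub
  have hRBmem : RB ∈ K := ⟨hRB0, hRBB, hRBimpl⟩
  obtain ⟨R₀, hR₀K, hmin⟩ :=
    hKcompact.exists_isMinOn ⟨RB, hRBmem⟩ contcost.continuousOn
  refine ⟨R₀, hR₀K.1, hR₀K.2.2, ?_⟩
  intro R' hR'0 hR'impl
  by_cases hle : (∑ s, ∑ a, R' s a) ≤ B
  · exact hmin ⟨hR'0, hle, hR'impl⟩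
  · have h1 : (∑ s, ∑ a, R₀ s a) ≤ B := hR₀K.2.1
    linarith [not_le.1 hle]
end

section
/- In any DDP, for every non-terminal state s, Pareto(𝒰_s) = Pareto( ⋃_{a ∈ A(s)} ( (R^A(s,a), R^P(s,a)) + Pareto(𝒰_{next(s,a)}) ) ), where v + U denotes the translate {v + u : u ∈ U}: the Pareto frontier of the set of attainable utility-vector pairs at a state is obtained from the Pareto frontiers at its successor states by translating by the one-step reward pair, taking the union over actions, and discarding dominated vectors. -/
open Finset

private def pdef (X : Set (ℝ × ℝ)) : Set (ℝ × ℝ) :=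
  {u ∈ X | ¬∃ w ∈ X, u ≤ w ∧ u ≠ w}

private lemma pdef_subset (X : Set (ℝ × ℝ)) : pdef X ⊆ X := fun _ h => h.1

private lemma exists_pdef_ge {X : Set (ℝ × ℝ)} (hX : X.Finite) {x} (hx : x ∈ X) :
    ∃ w ∈ pdef X, x ≤ w := by
  have h1 : ({y ∈ X | x ≤ y}).Finite := hX.subset (fun y hy => hy.1)
  obtain ⟨w, hw, hmax⟩ := Set.Finite.exists_maximalFor id _ h1 ⟨x, hx, le_refl x⟩
  exact ⟨w, ⟨hw.1, fun ⟨z, hz, hle, hne⟩ => hne (le_antisymm hle (hmax (j := z) ⟨hz, hw.2.trans hle⟩ hle))⟩, hw.2⟩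

private lemma pdef_eq {X Y : Set (ℝ × ℝ)} (hYX : Y ⊆ X)
    (h : ∀ x ∈ X, ∃ y ∈ Y, x ≤ y) : pdef X = pdef Y := by
  ext u
  constructor
  · rintro ⟨huX, hnd⟩
    obtain ⟨y, hy, hle⟩ := h u huX
    have huy : u = y := by
      by_contra hne
      exact hnd ⟨y, hYX hy, hle, hne⟩
    subst huy
    exact ⟨hy, fun ⟨w, hw, hle', hne⟩ => hnd ⟨w, hYX hw, hle', hne⟩⟩
  · rintro ⟨huY, hnd⟩
    refine ⟨hYX huY, fun ⟨w, hw, hle, hne⟩ => ?_⟩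
    obtain ⟨y, hy, hle'⟩ := h w hw
    exact hnd ⟨y, hy, hle.trans hle', fun he => hne (le_antisymm hle (he ▸ hle'))⟩

/-- in a DDP, the Pareto frontier of the attainable utility-vector set at a
non-terminal state equals the Pareto frontier of the union, over actions, of the one-step
reward translates of the Pareto frontiers at the successor states. -/
theorem stmt_10 {S A : Type} [Fintype S] [Fintype A]
    (act : S → Finset A) (next : S → A → S)
    (rank : S → ℕ) (hacyc : ∀ s, ∀ a ∈ act s, rank (next s a) < rank s)
    (V : (S → A) → (S → A → ℝ) → S → ℝ)
    (hVterm : ∀ (π : S → A) (R : S → A → ℝ) (s : S), act s = ∅ → V π R s = 0)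
    (hVrec : ∀ (π : S → A) (R : S → A → ℝ) (s : S), act s ≠ ∅ →
      V π R s = R s (π s) + V π R (next s (π s)))
    (RA RP : S → A → ℝ)
    (Pareto : Set (ℝ × ℝ) → Set (ℝ × ℝ))
    (hPareto : ∀ X : Set (ℝ × ℝ), Pareto X = {u ∈ X | ¬∃ w ∈ X, u ≤ w ∧ u ≠ w})
    (U : S → Set (ℝ × ℝ))
    (hU : ∀ t, U t = {u | ∃ π : S → A, (∀ r, act r ≠ ∅ → π r ∈ act r) ∧
      u = (V π RA t, V π RP t)})
    (s : S) (hs : act s ≠ ∅) :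
    Pareto (U s) =
      Pareto (⋃ a ∈ act s,
        (fun u => ((RA s a, RP s a) : ℝ × ℝ) + u) '' Pareto (U (next s a))) := by
  classical
  have hP : ∀ X, Pareto X = pdef X := hPareto
  -- V locality: value at t depends only on π at states of rank ≤ rank t (for valid π)
  have hVloc : ∀ n (t : S), rank t ≤ n → ∀ (π π' : S → A) (R : S → A → ℝ),
      (∀ r, act r ≠ ∅ → π r ∈ act r) →
      (∀ r, rank r ≤ rank t → π r = π' r) → V π R t = V π' R t := by
    intro n
    induction n with
    | zero =>
      intro t ht π π' R hval hag
      by_cases h : act t = ∅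
      · rw [hVterm π R t h, hVterm π' R t h]
      · exfalso
        have := hacyc t (π t) (hval t h)
        omega
    | succ n ih =>
      intro t ht π π' R hval hag
      by_cases h : act t = ∅
      · rw [hVterm π R t h, hVterm π' R t h]
      · have hpt : π t = π' t := hag t le_rfl
        have hlt : rank (next t (π t)) < rank t := hacyc t (π t) (hval t h)
        rw [hVrec π R t h, hVrec π' R t h, ← hpt]
        have hrec := ih (next t (π t)) (by omega) π π' R hval
          (fun r hr => hag r (by omega))
        rw [hrec]
  -- finiteness of U t
  have hUfin : ∀ t, (U t).Finite := by
    intro t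
    have : U t ⊆ Set.range (fun π : S → A => ((V π RA t, V π RP t) : ℝ × ℝ)) := by
      rw [hU t]
      rintro u ⟨π, _, hu⟩
      exact ⟨π, hu.symm⟩
    exact (Set.finite_range _).subset this
  -- decomposition of U s
  have hUdec : U s = ⋃ a ∈ act s,
      (fun u => ((RA s a, RP s a) : ℝ × ℝ) + u) '' U (next s a) := by
    ext u
    simp only [Set.mem_iUnion, Set.mem_image]
    constructor
    · intro hu
      rw [hU s] at hu
      obtain ⟨π, hval, hu⟩ := hu
      refine ⟨π s, hval s hs, (V π RA (next s (π s)), V π RP (next s (π s))), ?_, ?_⟩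
      · rw [hU]; exact ⟨π, hval, rfl⟩
      · rw [hu, hVrec π RA s hs, hVrec π RP s hs]
        simp [Prod.ext_iff]
    · rintro ⟨a, ha, v, hv, hvu⟩
      rw [hU] at hv
      obtain ⟨π, hval, hv⟩ := hv
      set π' := Function.update π s a with hπ'
      have hval' : ∀ r, act r ≠ ∅ → π' r ∈ act r := by
        intro r hr
        by_cases hrs : r = s
        · subst hrs; simp [hπ', ha]
        · simp [hπ', Function.update_of_ne hrs]; exact hval r hr
      have hπ's : π' s = a := by simp [hπ']
      have hrank : rank (next s a) < rank s := hacyc s a ha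
      have hVeq : ∀ R, V π R (next s a) = V π' R (next s a) := by
        intro R
        refine hVloc (rank (next s a)) (next s a) le_rfl π π' R hval ?_
        intro r hr
        have hrs : r ≠ s := by
          intro h; subst h; omega
        simp [hπ', Function.update_of_ne hrs]
      rw [hU s]
      refine ⟨π', hval', ?_⟩
      rw [hVrec π' RA s hs, hVrec π' RP s hs, hπ's, ← hVeq, ← hVeq, ← hvu, hv]
      simp [Prod.ext_iff]
  -- main argument
  rw [hP, hP, hUdec]
  refine pdef_eq ?_ ?_
  · refine Set.iUnion_mono fun a => Set.iUnion_mono fun ha => ?_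
    refine Set.image_mono ?_
    rw [hP]
    exact pdef_subset _
  · intro x hx
    simp only [Set.mem_iUnion, Set.mem_image] at hx
    obtain ⟨a, ha, v, hv, hvx⟩ := hx
    obtain ⟨w, hw, hle⟩ := exists_pdef_ge (hUfin (next s a)) hv
    refine ⟨(RA s a, RP s a) + w, ?_, ?_⟩
    · simp only [Set.mem_iUnion, Set.mem_image]
      exact ⟨a, ha, w, by rw [hP]; exact hw, rfl⟩
    · rw [← hvx]
      exact add_le_add le_rfl hle
end

section
/- In any DDP with budget B ≥ 0, define the principal's optimal value V*_P := max{ V(π, R^P) : π a B-implementable policy }. Then V*_P = max{ u₂ : u ∈ Pareto(𝒰_{s₀}), u₁ ≥ V(π^A, R^A) − B }, and both maxima are attained. -/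
open Finset

variable {S A : Type}

def traj [DecidableEq S] [DecidableEq A] (act : S → Finset A) (next : S → A → S)
    (rank : S → ℕ) (hacyc : ∀ s, ∀ a ∈ act s, rank (next s a) < rank s)
    (π : S → A) (hπ : ∀ s, act s ≠ ∅ → π s ∈ act s) (s : S) : Finset S :=
  if h : act s = ∅ then ∅
  else insert s (traj act next rank hacyc π hπ (next s (π s)))
termination_by rank s
decreasing_by exact hacyc s (π s) (hπ s h)

section Helpers
variable [DecidableEq S] [DecidableEq A]
    (act : S → Finset A) (next : S → A → S) (rank : S → ℕ)
    (hacyc : ∀ s, ∀ a ∈ act s, rank (next s a) < rank s)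

lemma traj_mem (π : S → A) (hπ : ∀ s, act s ≠ ∅ → π s ∈ act s) :
    ∀ n s, rank s ≤ n → ∀ s' ∈ traj act next rank hacyc π hπ s,
      rank s' ≤ rank s ∧ act s' ≠ ∅ := by
  intro n
  induction n using Nat.strong_induction_on with
  | _ n ih =>
    intro s hs s' hs'
    rw [traj] at hs'
    by_cases h : act s = ∅
    · simp [h] at hs'
    · rw [dif_neg h] at hs'
      rcases Finset.mem_insert.mp hs' with rfl | hs'
      · exact ⟨le_refl _, h⟩
      · have ht := hacyc s (π s) (hπ s h)
        have := ih (rank (next s (π s))) (by omega) _ (le_refl _) s' hs'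
        exact ⟨by omega, this.2⟩
end Helpers

section Helpers2
variable [Fintype S] [Fintype A] [DecidableEq S] [DecidableEq A]
    (act : S → Finset A) (next : S → A → S) (rank : S → ℕ)
    (hacyc : ∀ s, ∀ a ∈ act s, rank (next s a) < rank s)
    (V : (S → A) → (S → A → ℝ) → S → ℝ)
    (hVterm : ∀ (π : S → A) (R : S → A → ℝ) (s : S), act s = ∅ → V π R s = 0)
    (hVrec : ∀ (π : S → A) (R : S → A → ℝ) (s : S), act s ≠ ∅ →
      V π R s = R s (π s) + V π R (next s (π s)))

lemma notMem_traj_next (π : S → A) (hπ : ∀ s, act s ≠ ∅ → π s ∈ act s)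
    (s : S) (h : act s ≠ ∅) :
    s ∉ traj act next rank hacyc π hπ (next s (π s)) := by
  intro hmem
  have := (traj_mem act next rank hacyc π hπ (rank (next s (π s))) _ le_rfl s hmem).1
  have := hacyc s (π s) (hπ s h)
  omega

include hVterm hVrec in
lemma V_eq_sum (π : S → A) (hπ : ∀ s, act s ≠ ∅ → π s ∈ act s) (R : S → A → ℝ) :
    ∀ n s, rank s ≤ n →
      V π R s = ∑ s' ∈ traj act next rank hacyc π hπ s, R s' (π s') := by
  intro n
  induction n using Nat.strong_induction_on with
  | _ n ih =>
    intro s hs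
    rw [traj]
    by_cases h : act s = ∅
    · rw [dif_pos h, Finset.sum_empty, hVterm π R s h]
    · rw [dif_neg h, Finset.sum_insert (notMem_traj_next act next rank hacyc π hπ s h),
        hVrec π R s h,
        ih (rank (next s (π s))) (by have := hacyc s (π s) (hπ s h); omega) _ le_rfl]

include hacyc hVterm hVrec in
lemma V_agree (R : S → A → ℝ) (π π' : S → A) (hπ : ∀ s, act s ≠ ∅ → π s ∈ act s) :
    ∀ n s, rank s ≤ n → (∀ u, rank u ≤ rank s → π u = π' u) → V π R s = V π' R s := by
  intro n
  induction n using Nat.strong_induction_on with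
  | _ n ih =>
    intro s hs hag
    by_cases h : act s = ∅
    · rw [hVterm π R s h, hVterm π' R s h]
    · have hps : π s = π' s := hag s le_rfl
      have hlt : rank (next s (π s)) < rank s := hacyc s (π s) (hπ s h)
      rw [hVrec π R s h, hVrec π' R s h, ← hps]
      congr 1
      exact ih (rank (next s (π s))) (by omega) _ le_rfl
        (fun u hu => hag u (by omega))

include hacyc hVterm hVrec in
lemma V_add (π : S → A) (hπ : ∀ s, act s ≠ ∅ → π s ∈ act s) (R1 R2 : S → A → ℝ) :
    ∀ n s, rank s ≤ n →
      V π (fun s a => R1 s a + R2 s a) s = V π R1 s + V π R2 s := by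
  intro n
  induction n using Nat.strong_induction_on with
  | _ n ih =>
    intro s hs
    by_cases h : act s = ∅
    · rw [hVterm _ _ s h, hVterm _ _ s h, hVterm _ _ s h]; ring
    · have hlt : rank (next s (π s)) < rank s := hacyc s (π s) (hπ s h)
      rw [hVrec _ _ s h, hVrec π R1 s h, hVrec π R2 s h,
        ih (rank (next s (π s))) (by omega) _ le_rfl]
      ring

include hacyc hVterm hVrec in
lemma Q_le (RA : S → A → ℝ) (πA : S → A) (hπA : ∀ s, act s ≠ ∅ → πA s ∈ act s)
    (hπAopt : ∀ π : S → A, (∀ s, act s ≠ ∅ → π s ∈ act s) → ∀ s, V π RA s ≤ V πA RA s) :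
    ∀ s, ∀ a ∈ act s, RA s a + V πA RA (next s a) ≤ V πA RA s := by
  intro s a ha
  set π'' : S → A := fun u => if u = s then a else πA u with hπ''
  have hne : act s ≠ ∅ := by
    intro he; rw [he] at ha; exact absurd ha (Finset.notMem_empty a)
  have hvalid : ∀ u, act u ≠ ∅ → π'' u ∈ act u := by
    intro u hu
    by_cases hus : u = s
    · subst hus; simpa [hπ''] using ha
    · simpa [hπ'', hus] using hπA u hu
  have h1 : V π'' RA s ≤ V πA RA s := hπAopt π'' hvalid s
  have h2 : π'' s = a := by simp [hπ'']
  have h3 : V π'' RA s = RA s a + V π'' RA (next s a) := by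
    rw [hVrec π'' RA s hne, h2]
  have h4 : V π'' RA (next s a) = V πA RA (next s a) := by
    refine V_agree act next rank hacyc V hVterm hVrec RA π'' πA hvalid
      (rank (next s a)) (next s a) le_rfl ?_
    intro u hu
    have hlt : rank (next s a) < rank s := hacyc s a ha
    have : u ≠ s := by intro he; subst he; omega
    simp [hπ'', this]
  rw [h3, h4] at h1
  exact h1

include hVterm hVrec in
lemma gap_sum (RA : S → A → ℝ) (πA : S → A)
    (π : S → A) (hπ : ∀ s, act s ≠ ∅ → π s ∈ act s) :
    ∀ n s, rank s ≤ n →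
      (∑ s' ∈ traj act next rank hacyc π hπ s,
        (V πA RA s' - (RA s' (π s') + V πA RA (next s' (π s'))))) =
      V πA RA s - V π RA s := by
  intro n
  induction n using Nat.strong_induction_on with
  | _ n ih =>
    intro s hs
    rw [traj]
    by_cases h : act s = ∅
    · rw [dif_pos h, Finset.sum_empty, hVterm πA RA s h, hVterm π RA s h]; ring
    · have hlt : rank (next s (π s)) < rank s := hacyc s (π s) (hπ s h)
      rw [dif_neg h, Finset.sum_insert (notMem_traj_next act next rank hacyc π hπ s h),
        ih (rank (next s (π s))) (by omega) _ le_rfl, hVrec π RA s h]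
      ring

include hacyc hVterm hVrec in
lemma V_le_W (RA : S → A → ℝ) (πA : S → A) (hπA : ∀ s, act s ≠ ∅ → πA s ∈ act s)
    (hπAopt : ∀ π : S → A, (∀ s, act s ≠ ∅ → π s ∈ act s) → ∀ s, V π RA s ≤ V πA RA s)
    (π : S → A) (hπ : ∀ s, act s ≠ ∅ → π s ∈ act s) (s₀ : S)
    (π' : S → A) (hπ' : ∀ s, act s ≠ ∅ → π' s ∈ act s) :
    ∀ n s, rank s ≤ n →
      V π' (fun u a => RA u a +
        (if u ∈ traj act next rank hacyc π hπ s₀ then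
          (if a = π u then V πA RA u - (RA u (π u) + V πA RA (next u (π u))) else 0)
         else 0)) s ≤ V πA RA s := by
  intro n
  induction n using Nat.strong_induction_on with
  | _ n ih =>
    intro s hs
    by_cases h : act s = ∅
    · rw [hVterm _ _ s h, hVterm πA RA s h]
    · have ha' : π' s ∈ act s := hπ' s h
      have hlt : rank (next s (π' s)) < rank s := hacyc s (π' s) ha'
      rw [hVrec _ _ s h]
      have hIH := ih (rank (next s (π' s))) (by omega) _ le_rfl
      by_cases hm : s ∈ traj act next rank hacyc π hπ s₀
      · by_cases hpa : π' s = π s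
        · rw [if_pos hm, if_pos hpa, hpa]
          have : RA s (π s) + (V πA RA s - (RA s (π s) + V πA RA (next s (π s))))
              = V πA RA s - V πA RA (next s (π s)) := by ring
          rw [hpa] at hIH
          linarith
        · rw [if_pos hm, if_neg hpa]
          have hq := Q_le act next rank hacyc V hVterm hVrec RA πA hπA hπAopt
            s (π' s) ha'
          linarith
      · rw [if_neg hm]
        have hq := Q_le act next rank hacyc V hVterm hVrec RA πA hπA hπAopt
          s (π' s) ha'
        linarith
end Helpers2
/-- in a DDP with budget `B ≥ 0`, the principal's optimal value over
`B`-implementable policies is attained and equals the maximal second coordinate over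
Pareto-frontier points of `𝒰_{s₀}` whose first coordinate is at least
`V(π^A,R^A) − B`, and this latter maximum is attained too. -/
theorem stmt_13 {S A : Type} [Fintype S] [Fintype A]
    (s₀ : S) (act : S → Finset A) (next : S → A → S)
    (rank : S → ℕ) (hacyc : ∀ s, ∀ a ∈ act s, rank (next s a) < rank s)
    (V : (S → A) → (S → A → ℝ) → S → ℝ)
    (hVterm : ∀ (π : S → A) (R : S → A → ℝ) (s : S), act s = ∅ → V π R s = 0)
    (hVrec : ∀ (π : S → A) (R : S → A → ℝ) (s : S), act s ≠ ∅ →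
      V π R s = R s (π s) + V π R (next s (π s)))
    (RA RP : S → A → ℝ)
    (πA : S → A) (hπA : ∀ s, act s ≠ ∅ → πA s ∈ act s)
    (hπAopt : ∀ π : S → A, (∀ s, act s ≠ ∅ → π s ∈ act s) → ∀ s, V π RA s ≤ V πA RA s)
    (B : ℝ) (hB : 0 ≤ B)
    (Pareto : Set (ℝ × ℝ) → Set (ℝ × ℝ))
    (hPareto : ∀ X : Set (ℝ × ℝ), Pareto X = {u ∈ X | ¬∃ w ∈ X, u ≤ w ∧ u ≠ w})
    (U : S → Set (ℝ × ℝ))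
    (hU : ∀ t, U t = {u | ∃ π : S → A, (∀ r, act r ≠ ∅ → π r ∈ act r) ∧
      u = (V π RA t, V π RP t)})
    (Impl : (S → A) → Prop)
    (hImpl : ∀ π : S → A, Impl π ↔
      ∃ RB : S → A → ℝ, (∀ s a, 0 ≤ RB s a) ∧ (∑ s, ∑ a, RB s a) ≤ B ∧
        ∀ π' : S → A, (∀ s, act s ≠ ∅ → π' s ∈ act s) →
          V π' (fun s a => RA s a + RB s a) s₀ ≤ V π (fun s a => RA s a + RB s a) s₀) :
    ∃ πstar : S → A, (∀ s, act s ≠ ∅ → πstar s ∈ act s) ∧ Impl πstar ∧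
      (∀ π : S → A, (∀ s, act s ≠ ∅ → π s ∈ act s) → Impl π →
        V π RP s₀ ≤ V πstar RP s₀) ∧
      ∃ u ∈ Pareto (U s₀), V πA RA s₀ - B ≤ u.1 ∧ u.2 = V πstar RP s₀ ∧
        ∀ u' ∈ Pareto (U s₀), V πA RA s₀ - B ≤ u'.1 → u'.2 ≤ u.2 := by
  classical
  -- Implementability is equivalent to feasibility of the agent value.
  have impl_of_feas : ∀ (π : S → A) (hπ : ∀ s, act s ≠ ∅ → π s ∈ act s),
      V πA RA s₀ - B ≤ V π RA s₀ → Impl π := by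
    intro π hπ hfeas
    rw [hImpl]
    refine ⟨fun u a => if u ∈ traj act next rank hacyc π hπ s₀ then
        (if a = π u then V πA RA u - (RA u (π u) + V πA RA (next u (π u))) else 0)
      else 0, ?_, ?_, ?_⟩
    · intro s a
      beta_reduce
      by_cases hm : s ∈ traj act next rank hacyc π hπ s₀
      · have hns : act s ≠ ∅ :=
          (traj_mem act next rank hacyc π hπ (rank s₀) s₀ le_rfl s hm).2
        have hq := Q_le act next rank hacyc V hVterm hVrec RA πA hπA hπAopt
          s (π s) (hπ s hns)
        by_cases ha : a = π s
        · rw [if_pos hm, if_pos ha]; linarith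
        · rw [if_pos hm, if_neg ha]
      · rw [if_neg hm]
    · beta_reduce
      have hinner : ∀ s : S, (∑ a : A, if s ∈ traj act next rank hacyc π hπ s₀ then
          (if a = π s then V πA RA s - (RA s (π s) + V πA RA (next s (π s))) else 0)
          else 0) =
          (if s ∈ traj act next rank hacyc π hπ s₀ then
            V πA RA s - (RA s (π s) + V πA RA (next s (π s))) else 0) := by
        intro s
        by_cases hm : s ∈ traj act next rank hacyc π hπ s₀ <;> simp [hm]
      calc (∑ s : S, ∑ a : A, if s ∈ traj act next rank hacyc π hπ s₀ then
          (if a = π s then V πA RA s - (RA s (π s) + V πA RA (next s (π s))) else 0)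
          else 0)
          = ∑ s : S, (if s ∈ traj act next rank hacyc π hπ s₀ then
            V πA RA s - (RA s (π s) + V πA RA (next s (π s))) else 0) := by
            exact Finset.sum_congr rfl fun s _ => hinner s
        _ = ∑ s ∈ traj act next rank hacyc π hπ s₀,
            (V πA RA s - (RA s (π s) + V πA RA (next s (π s)))) := by
            rw [Finset.sum_ite_mem, Finset.univ_inter]
        _ = V πA RA s₀ - V π RA s₀ :=
            gap_sum act next rank hacyc V hVterm hVrec RA πA π hπ (rank s₀) s₀ le_rfl
        _ ≤ B := by linarith
    · intro π' hπ'
      beta_reduce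
      have hub := V_le_W act next rank hacyc V hVterm hVrec RA πA hπA hπAopt
        π hπ s₀ π' hπ' (rank s₀) s₀ le_rfl
      have heq : V π (fun u a => RA u a +
          (if u ∈ traj act next rank hacyc π hπ s₀ then
            (if a = π u then V πA RA u - (RA u (π u) + V πA RA (next u (π u))) else 0)
          else 0)) s₀ = V πA RA s₀ := by
        rw [V_eq_sum act next rank hacyc V hVterm hVrec π hπ _ (rank s₀) s₀ le_rfl]
        have : ∀ s' ∈ traj act next rank hacyc π hπ s₀,
            (RA s' (π s') +
              (if s' ∈ traj act next rank hacyc π hπ s₀ then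
                (if π s' = π s' then
                  V πA RA s' - (RA s' (π s') + V πA RA (next s' (π s'))) else 0)
              else 0)) =
            RA s' (π s') + (V πA RA s' - (RA s' (π s') + V πA RA (next s' (π s')))) := by
          intro s' hs'
          rw [if_pos hs', if_pos rfl]
        rw [Finset.sum_congr rfl this, Finset.sum_add_distrib,
          gap_sum act next rank hacyc V hVterm hVrec RA πA π hπ (rank s₀) s₀ le_rfl,
          ← V_eq_sum act next rank hacyc V hVterm hVrec π hπ RA (rank s₀) s₀ le_rfl]
        ring
      calc V π' (fun u a => RA u a +
          (if u ∈ traj act next rank hacyc π hπ s₀ then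
            (if a = π u then V πA RA u - (RA u (π u) + V πA RA (next u (π u))) else 0)
          else 0)) s₀ ≤ V πA RA s₀ := hub
        _ = _ := heq.symm
  have feas_of_impl : ∀ (π : S → A), (∀ s, act s ≠ ∅ → π s ∈ act s) → Impl π →
      V πA RA s₀ - B ≤ V π RA s₀ := by
    intro π hπ himpl
    rcases (hImpl π).mp himpl with ⟨RB, h0, hsum, hopt⟩
    have e1 : V πA (fun s a => RA s a + RB s a) s₀ = V πA RA s₀ + V πA RB s₀ :=
      V_add act next rank hacyc V hVterm hVrec πA hπA RA RB (rank s₀) s₀ le_rfl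
    have e2 : V π (fun s a => RA s a + RB s a) s₀ = V π RA s₀ + V π RB s₀ :=
      V_add act next rank hacyc V hVterm hVrec π hπ RA RB (rank s₀) s₀ le_rfl
    have n1 : 0 ≤ V πA RB s₀ := by
      rw [V_eq_sum act next rank hacyc V hVterm hVrec πA hπA RB (rank s₀) s₀ le_rfl]
      exact Finset.sum_nonneg fun s _ => h0 s (πA s)
    have n2 : V π RB s₀ ≤ B := by
      rw [V_eq_sum act next rank hacyc V hVterm hVrec π hπ RB (rank s₀) s₀ le_rfl]
      calc (∑ s' ∈ traj act next rank hacyc π hπ s₀, RB s' (π s'))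
          ≤ ∑ s' : S, RB s' (π s') :=
            Finset.sum_le_sum_of_subset_of_nonneg (Finset.subset_univ _)
              (fun i _ _ => h0 i (π i))
        _ ≤ ∑ s, ∑ a, RB s a :=
            Finset.sum_le_sum fun s _ =>
              Finset.single_le_sum (fun a _ => h0 s a) (Finset.mem_univ (π s))
        _ ≤ B := hsum
    have hle := hopt πA hπA
    linarith
  -- choose lexicographic maximizer
  set F : Finset (S → A) := Finset.univ.filter
    (fun π => (∀ s, act s ≠ ∅ → π s ∈ act s) ∧ V πA RA s₀ - B ≤ V π RA s₀) with hF
  have hmemF : ∀ π : S → A, π ∈ F ↔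
      ((∀ s, act s ≠ ∅ → π s ∈ act s) ∧ V πA RA s₀ - B ≤ V π RA s₀) := by
    intro π; rw [hF, Finset.mem_filter]; simp
  have hπAF : πA ∈ F := (hmemF πA).mpr ⟨hπA, by linarith⟩
  obtain ⟨π₁, hπ₁F, hπ₁max⟩ := F.exists_max_image (fun π => V π RP s₀) ⟨πA, hπAF⟩
  set F' : Finset (S → A) := F.filter (fun π => V π RP s₀ = V π₁ RP s₀) with hF'
  have hπ₁F' : π₁ ∈ F' := by rw [hF', Finset.mem_filter]; exact ⟨hπ₁F, rfl⟩
  obtain ⟨πs, hπsF', hπsmax⟩ := F'.exists_max_image (fun π => V π RA s₀) ⟨π₁, hπ₁F'⟩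
  have hπsF : πs ∈ F := (Finset.mem_filter.mp hπsF').1
  have hπsRP : V πs RP s₀ = V π₁ RP s₀ := (Finset.mem_filter.mp hπsF').2
  have hπsvalid : ∀ s, act s ≠ ∅ → πs s ∈ act s := ((hmemF πs).mp hπsF).1
  have hπsfeas : V πA RA s₀ - B ≤ V πs RA s₀ := ((hmemF πs).mp hπsF).2
  have hRPmax : ∀ π : S → A, (∀ s, act s ≠ ∅ → π s ∈ act s) → Impl π →
      V π RP s₀ ≤ V πs RP s₀ := by
    intro π hπ himpl
    have hπF : π ∈ F := (hmemF π).mpr ⟨hπ, feas_of_impl π hπ himpl⟩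
    rw [hπsRP]
    exact hπ₁max π hπF
  refine ⟨πs, hπsvalid, impl_of_feas πs hπsvalid hπsfeas, hRPmax,
    ⟨(V πs RA s₀, V πs RP s₀), ?_, hπsfeas, rfl, ?_⟩⟩
  · rw [hPareto, hU]
    refine ⟨⟨πs, hπsvalid, rfl⟩, ?_⟩
    rintro ⟨w, hw, hle, hne⟩
    obtain ⟨π', hπ', rfl⟩ := hw
    have h1 : V πs RA s₀ ≤ V π' RA s₀ := hle.1
    have h2 : V πs RP s₀ ≤ V π' RP s₀ := hle.2
    have hπ'F : π' ∈ F := (hmemF π').mpr ⟨hπ', by linarith⟩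
    have h2' : V π' RP s₀ = V π₁ RP s₀ := le_antisymm (hπ₁max π' hπ'F) (by
      have := hπ₁max π' hπ'F; rw [← hπsRP]; linarith [hπ₁max π' hπ'F])
    have hπ'F' : π' ∈ F' := by rw [hF', Finset.mem_filter]; exact ⟨hπ'F, h2'⟩
    have h1' : V π' RA s₀ ≤ V πs RA s₀ := hπsmax π' hπ'F'
    exact hne (Prod.ext (le_antisymm h1 h1') (by rw [h2', ← hπsRP]))
  · intro u' hu' hfeas'
    rw [hPareto, hU] at hu'
    obtain ⟨⟨π', hπ', rfl⟩, -⟩ := hu'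
    have hπ'F : π' ∈ F := (hmemF π').mpr ⟨hπ', hfeas'⟩
    have := hπ₁max π' hπ'F
    simp only []
    rw [hπsRP]
    exact this
end

section
/- Consider a DDP in which every trajectory from s₀ contains at most H state-action pairs, let B ≥ 0 and ε > 0, and define the ε-discretized rewards R̃^X(s,a) := ε·⌊R^X(s,a)/ε⌋ for X ∈ {A, P}. Let V*_P := max{ V(π, R^P) : π a policy with V(π, R^A) ≥ max_{π'} V(π', R^A) − B }. Then every policy π̃ attaining the maximum max{ V(π, R̃^P) : π a policy with V(π, R̃^A) ≥ max_{π'} V(π', R̃^A) − (B + Hε) } satisfies V(π̃, R^P) ≥ V*_P − Hε. -/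
open Finset

/-- in a DDP in which every trajectory from `s₀` has at most `H`
state-action pairs, any policy optimal for the ε-discretized instance with budget
`B + Hε` guarantees the principal at least `V*_P − Hε` in the original instance. -/
theorem stmt_14 {S A : Type} [Fintype S] [Fintype A]
    (s₀ : S) (act : S → Finset A) (next : S → A → S)
    (H : ℕ) (rank : S → ℕ)
    (hacyc : ∀ s, ∀ a ∈ act s, rank (next s a) < rank s)
    (hH : rank s₀ ≤ H)
    (V : (S → A) → (S → A → ℝ) → S → ℝ)
    (hVterm : ∀ (π : S → A) (R : S → A → ℝ) (s : S), act s = ∅ → V π R s = 0)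
    (hVrec : ∀ (π : S → A) (R : S → A → ℝ) (s : S), act s ≠ ∅ →
      V π R s = R s (π s) + V π R (next s (π s)))
    (RA RP : S → A → ℝ)
    (B : ℝ) (hB : 0 ≤ B) (ε : ℝ) (hε : 0 < ε)
    (RtA RtP : S → A → ℝ)
    (hRtA : ∀ s a, RtA s a = ε * (⌊RA s a / ε⌋ : ℝ))
    (hRtP : ∀ s a, RtP s a = ε * (⌊RP s a / ε⌋ : ℝ))
    (πA : S → A) (hπA : ∀ s, act s ≠ ∅ → πA s ∈ act s)
    (hπAopt : ∀ π : S → A, (∀ s, act s ≠ ∅ → π s ∈ act s) → V π RA s₀ ≤ V πA RA s₀)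
    (πtA : S → A) (hπtA : ∀ s, act s ≠ ∅ → πtA s ∈ act s)
    (hπtAopt : ∀ π : S → A, (∀ s, act s ≠ ∅ → π s ∈ act s) → V π RtA s₀ ≤ V πtA RtA s₀)
    (πstar : S → A) (hπstar : ∀ s, act s ≠ ∅ → πstar s ∈ act s)
    (hfeas : V πA RA s₀ - B ≤ V πstar RA s₀)
    (hopt : ∀ π : S → A, (∀ s, act s ≠ ∅ → π s ∈ act s) →
      V πA RA s₀ - B ≤ V π RA s₀ → V π RP s₀ ≤ V πstar RP s₀)
    (πt : S → A) (hπt : ∀ s, act s ≠ ∅ → πt s ∈ act s)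
    (htfeas : V πtA RtA s₀ - (B + H * ε) ≤ V πt RtA s₀)
    (htopt : ∀ π : S → A, (∀ s, act s ≠ ∅ → π s ∈ act s) →
      V πtA RtA s₀ - (B + H * ε) ≤ V π RtA s₀ → V π RtP s₀ ≤ V πt RtP s₀) :
    V πstar RP s₀ - H * ε ≤ V πt RP s₀ := by
  -- pointwise bounds on discretization
  have hlow : ∀ (R Rt : S → A → ℝ), (∀ s a, Rt s a = ε * (⌊R s a / ε⌋ : ℝ)) →
      ∀ s a, Rt s a ≤ R s a := by
    intro R Rt h s a
    rw [h]
    have := Int.floor_le (R s a / ε)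
    calc ε * (⌊R s a / ε⌋ : ℝ) ≤ ε * (R s a / ε) := by
          exact mul_le_mul_of_nonneg_left this hε.le
      _ = R s a := by field_simp
  have hhigh : ∀ (R Rt : S → A → ℝ), (∀ s a, Rt s a = ε * (⌊R s a / ε⌋ : ℝ)) →
      ∀ s a, R s a ≤ Rt s a + ε := by
    intro R Rt h s a
    rw [h]
    have := (Int.lt_floor_add_one (R s a / ε)).le
    calc R s a = ε * (R s a / ε) := by field_simp
      _ ≤ ε * ((⌊R s a / ε⌋ : ℝ) + 1) := mul_le_mul_of_nonneg_left this hε.le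
      _ = ε * (⌊R s a / ε⌋ : ℝ) + ε := by ring
  -- key induction
  have key : ∀ n (s : S), rank s ≤ n → ∀ (π : S → A), (∀ s, act s ≠ ∅ → π s ∈ act s) →
      ∀ (R Rt : S → A → ℝ), (∀ s a, Rt s a = ε * (⌊R s a / ε⌋ : ℝ)) →
      V π Rt s ≤ V π R s ∧ V π R s ≤ V π Rt s + rank s * ε := by
    intro n
    induction n with
    | zero =>
      intro s hs π hπ R Rt h
      by_cases hact : act s = ∅
      · rw [hVterm π R s hact, hVterm π Rt s hact]
        constructor
        · exact le_refl 0
        · positivity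
      · exfalso
        rcases Finset.nonempty_iff_ne_empty.mpr hact with ⟨a, ha⟩
        have := hacyc s a ha
        omega
    | succ n ih =>
      intro s hs π hπ R Rt h
      by_cases hact : act s = ∅
      · rw [hVterm π R s hact, hVterm π Rt s hact]
        constructor
        · exact le_refl 0
        · positivity
      · rw [hVrec π R s hact, hVrec π Rt s hact]
        have hrk : rank (next s (π s)) < rank s := hacyc s (π s) (hπ s hact)
        have hnle : rank (next s (π s)) ≤ n := by omega
        obtain ⟨h1, h2⟩ := ih (next s (π s)) hnle π hπ R Rt h
        constructor
        · exact add_le_add (hlow R Rt h s (π s)) h1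
        · have hr1 : (1 : ℝ) ≤ rank s := by exact_mod_cast Nat.one_le_iff_ne_zero.mpr (by omega)
          have hrk' : (rank (next s (π s)) : ℝ) + 1 ≤ (rank s : ℝ) := by
            exact_mod_cast hrk
          calc R s (π s) + V π R (next s (π s))
              ≤ (Rt s (π s) + ε) + (V π Rt (next s (π s)) + rank (next s (π s)) * ε) :=
                add_le_add (hhigh R Rt h s (π s)) h2
            _ ≤ Rt s (π s) + V π Rt (next s (π s)) + rank s * ε := by nlinarith
  -- apply key at s₀
  have kA := fun π hπ => key (rank s₀) s₀ le_rfl π hπ RA RtA hRtA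
  have kP := fun π hπ => key (rank s₀) s₀ le_rfl π hπ RP RtP hRtP
  have hrke : (rank s₀ : ℝ) * ε ≤ (H : ℝ) * ε := by
    have : (rank s₀ : ℝ) ≤ H := by exact_mod_cast hH
    nlinarith
  -- πstar is feasible for the discretized instance with budget B + Hε
  have hfeas' : V πtA RtA s₀ - (B + H * ε) ≤ V πstar RtA s₀ := by
    have h1 : V πtA RtA s₀ ≤ V πtA RA s₀ := (kA πtA hπtA).1
    have h2 : V πtA RA s₀ ≤ V πA RA s₀ := hπAopt πtA hπtA
    have h3 : V πstar RA s₀ ≤ V πstar RtA s₀ + rank s₀ * ε := (kA πstar hπstar).2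
    linarith
  have hstep : V πstar RtP s₀ ≤ V πt RtP s₀ := htopt πstar hπstar hfeas'
  have h4 : V πstar RP s₀ ≤ V πstar RtP s₀ + rank s₀ * ε := (kP πstar hπstar).2
  have h5 : V πt RtP s₀ ≤ V πt RP s₀ := (kP πt hπt).1
  linarith
end
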